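/- arXiv:1509.04944 — 9 statements merged into one kernel-verified Lean document; each statement's English description precedes it below -/
import Mathlib

section
/- Let G be a graph and let x be a simplicial vertex of G (its neighborhood induces a clique). Then x is an element of every geodetic set of G. -/
open SimpleGraph

/-- `S` is geodetic in `G`: every vertex lies on a shortest path (geodesic)
between two vertices of `S`. -/
def IsGeodetic {V : Type*} (G : SimpleGraph V) (S : Set V) : Prop :=
  ∀ z : V, ∃ x ∈ S, ∃ y ∈ S, ∃ p : G.Walk x y,
    p.IsPath ∧ p.length = G.dist x y ∧ z ∈ p.support

/-- The geodetic number of `G`: minimum cardinality of a geodetic set. -/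
noncomputable def geodeticNumber {V : Type*} (G : SimpleGraph V) : ℕ :=
  sInf {n | ∃ S : Set V, IsGeodetic G S ∧ S.ncard = n}

/-- A simplicial vertex belongs to every geodetic set. -/
theorem simplicial_mem_geodetic {V : Type*} (G : SimpleGraph V) (x : V)
    (hx : G.IsClique (G.neighborSet x)) (S : Set V) (hS : IsGeodetic G S) :
    x ∈ S := by
  obtain ⟨a, ha, b, hb, p, hp, hlen, hxp⟩ := hS x
  by_contra hxS
  classical
  have hxa : x ≠ a := fun h => hxS (h ▸ ha)
  have hxb : x ≠ b := fun h => hxS (h ▸ hb)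
  set q := p.takeUntil x hxp with hq
  set r := p.dropUntil x hxp with hr
  have hqr : q.append r = p := p.take_spec hxp
  -- r is not nil
  obtain ⟨w, hxw, r', hr'⟩ :=
    (SimpleGraph.Walk.not_nil_iff).1 (SimpleGraph.Walk.not_nil_of_ne (p := r) hxb)
  obtain ⟨u, hxu, t, ht⟩ :=
    (SimpleGraph.Walk.not_nil_iff).1
      (SimpleGraph.Walk.not_nil_of_ne (p := q.reverse) hxa)
  have hqlen : t.length + 1 = q.length := by
    have := congrArg SimpleGraph.Walk.length ht
    simpa using this.symm
  have hrlen : r'.length + 1 = r.length := by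
    have := congrArg SimpleGraph.Walk.length hr'
    simpa using this.symm
  have hplen : q.length + r.length = p.length := by
    have := congrArg SimpleGraph.Walk.length hqr
    simpa using this
  -- u ∈ q.support
  have hu : u ∈ q.support := by
    have : u ∈ q.reverse.support := by
      rw [ht]; simp
    simpa using this
  have hw : w ∈ r.support.tail := by
    rw [hr']; simp
  -- disjointness from path
  have hsupp : p.support = q.support ++ r.support.tail := by
    rw [← hqr, SimpleGraph.Walk.support_append]
  have hnd : p.support.Nodup := hp.support_nodup
  rw [hsupp] at hnd
  have huw : u ≠ w := by
    intro h
    exact (List.disjoint_of_nodup_append hnd) hu (h ▸ hw)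
  have hadj : G.Adj u w := hx hxu hxw huw
  -- shortcut walk
  let p' : G.Walk a b := t.reverse.append (SimpleGraph.Walk.cons hadj r')
  have hp'len : p'.length = p.length - 1 := by
    simp only [p', SimpleGraph.Walk.length_append, SimpleGraph.Walk.length_reverse,
      SimpleGraph.Walk.length_cons]
    omega
  have hdist : G.dist a b ≤ p'.length := SimpleGraph.dist_le p'
  have hge : 2 ≤ p.length := by omega
  omega
end

section
/- Let T be a tree with diameter exactly 3. Then the geodetic number of the complement of T equals 2. -/
open SimpleGraph

/-- Splitting a shortest walk at a support vertex splits the distance. -/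
private lemma dist_split {V : Type*} [DecidableEq V] {G : SimpleGraph V} (hconn : G.Connected)
    {a b w : V} (p : G.Walk a b) (hplen : p.length = G.dist a b) (hw : w ∈ p.support) :
    G.dist a w + G.dist w b = G.dist a b := by
  have h1 : (p.takeUntil w hw).length + (p.dropUntil w hw).length = p.length := by
    rw [← SimpleGraph.Walk.length_append, SimpleGraph.Walk.take_spec]
  have h2 := SimpleGraph.dist_le (p.takeUntil w hw)
  have h3 := SimpleGraph.dist_le (p.dropUntil w hw)
  have h4 := hconn.dist_triangle (u := a) (v := w) (w := b)
  omega

/-- If `T` is a tree with diameter exactly 3, then the geodetic number of its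
complement is 2. -/
theorem geodeticNumber_compl_of_diam_eq_three {V : Type*} [Fintype V] (G : SimpleGraph V)
    (hT : G.IsTree) (hd : G.diam = 3) :
    geodeticNumber Gᶜ = 2 := by
  classical
  have hconn := hT.isConnected
  have huniq : ∀ {a b : V} (p q : G.Walk a b), p.IsPath → q.IsPath → p = q := by
    intro a b p q hp hq
    exact (hT.existsUnique_path a b).unique hp hq
  have hne0 : G.diam ≠ 0 := by omega
  have hnetop := SimpleGraph.ediam_ne_top_of_diam_ne_zero hne0
  have hNontriv : Nontrivial V := SimpleGraph.nontrivial_of_diam_ne_zero hne0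
  -- every path in a tree of diameter 3 has length at most 3
  have pathlen : ∀ {a b : V} (p : G.Walk a b), p.IsPath → p.length ≤ 3 := by
    intro a b p hp
    obtain ⟨q, hq, hql⟩ := hconn.exists_path_of_dist a b
    have := huniq p q hp hq
    rw [this, hql]
    have := SimpleGraph.dist_le_diam (G := G) hnetop (u := a) (v := b)
    omega
  -- no triangles
  have tri : ∀ {a b e : V}, G.Adj a b → G.Adj b e → G.Adj a e → False := by
    intro a b e hab hbe hae
    have h1 : (SimpleGraph.Walk.cons hab (SimpleGraph.Walk.cons hbe SimpleGraph.Walk.nil)).IsPath := by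
      simp [SimpleGraph.Walk.cons_isPath_iff, hab.ne, hbe.ne, hae.ne]
    have h2 : (SimpleGraph.Walk.cons hae SimpleGraph.Walk.nil).IsPath := by
      simp [hae.ne]
    have h3 := congrArg SimpleGraph.Walk.length (huniq _ _ h1 h2)
    simp at h3
  -- no 4-cycles
  have quad : ∀ {a b e f : V}, G.Adj a b → G.Adj b e → G.Adj e f → G.Adj a f →
      a ≠ e → b ≠ f → False := by
    intro a b e f hab hbe hef haf hae hbf
    have h1 : (SimpleGraph.Walk.cons hab (SimpleGraph.Walk.cons hbe
        (SimpleGraph.Walk.cons hef SimpleGraph.Walk.nil))).IsPath := by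
      simp [SimpleGraph.Walk.cons_isPath_iff, hab.ne, hbe.ne, hef.ne, hae, hbf, haf.ne]
    have h2 : (SimpleGraph.Walk.cons haf SimpleGraph.Walk.nil).IsPath := by
      simp [haf.ne]
    have h3 := congrArg SimpleGraph.Walk.length (huniq _ _ h1 h2)
    simp at h3
  -- obtain a diametral path  u - c - d - v
  obtain ⟨u, v, huv⟩ := SimpleGraph.exists_dist_eq_diam (G := G)
  rw [hd] at huv
  obtain ⟨p, hp, hpl⟩ := hconn.exists_path_of_dist u v
  rw [huv] at hpl
  cases p with
  | nil => simp at hpl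
  | @cons _ c _ h1 p1 =>
    cases p1 with
    | nil => simp at hpl
    | @cons _ d _ h2 p2 =>
      cases p2 with
      | nil => simp at hpl
      | @cons _ w _ h3 p3 =>
        cases p3 with
        | cons h4 p4 => simp [SimpleGraph.Walk.length_cons] at hpl
        | nil =>
          -- now h1 : G.Adj u c, h2 : G.Adj c d, h3 : G.Adj d v (w = v forced)
          clear hpl huv
          -- distinctness from the path
          have hnodup : ([u, c, d, v] : List V).Nodup := by
            simpa [SimpleGraph.Walk.isPath_def] using hp
          simp [List.nodup_cons] at hnodup
          obtain ⟨⟨hu_c, hu_d, hu_v⟩, ⟨hc_d, hc_v⟩, hd_v⟩ := hnodup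
          clear hp
          have hud : ¬G.Adj u d := fun h => tri h1 h2 h
          have hcv : ¬G.Adj c v := fun h => tri h2 h3 h
          have huv' : ¬G.Adj u v := fun h => quad h1 h2 h3 h hu_d hc_v
          -- Claim A: every vertex other than c, d is adjacent to c or d
          have claimA : ∀ z : V, z ≠ c → z ≠ d → G.Adj c z ∨ G.Adj d z := by
            intro z hzc hzd
            by_contra hcon
            push_neg at hcon
            obtain ⟨hcz, hdz⟩ := hcon
            have hk3 : G.dist c z ≤ 3 := by
              have := SimpleGraph.dist_le_diam (G := G) hnetop (u := c) (v := z)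
              omega
            have hk0 : G.dist c z ≠ 0 :=
              SimpleGraph.dist_ne_zero_iff_ne_and_reachable.mpr
                ⟨fun h => hzc h.symm, hconn.preconnected c z⟩
            have hk1 : G.dist c z ≠ 1 := fun h => hcz (SimpleGraph.dist_eq_one_iff_adj.mp h)
            obtain ⟨q, hq, hql⟩ := hconn.exists_path_of_dist c z
            cases q with
            | nil => exact hzc rfl
            | @cons _ x _ h q' =>
              have hq' : q'.IsPath := hq.of_cons
              have hql' : q'.length + 1 = G.dist c z := by simpa using hql
              have hq'dist : q'.length = G.dist x z := by
                have h5 := SimpleGraph.dist_le q'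
                have h6 := hconn.dist_triangle (u := c) (v := x) (w := z)
                have h7 : G.dist c x = 1 := SimpleGraph.dist_eq_one_iff_adj.mpr h
                omega
              by_cases hxd : x = d
              · subst hxd
                have hk2 : G.dist c z ≠ 2 := by
                  intro hk
                  apply hdz
                  apply SimpleGraph.dist_eq_one_iff_adj.mp
                  omega
                have hu_not : u ∉ (SimpleGraph.Walk.cons h q').support := by
                  simp only [SimpleGraph.Walk.support_cons, List.mem_cons]
                  rintro (rfl | husup)
                  · exact hu_c rfl
                  · have hsplit := dist_split hconn q' hq'dist husup
                    have hdu0 : G.dist x u ≠ 0 :=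
                      SimpleGraph.dist_ne_zero_iff_ne_and_reachable.mpr
                        ⟨fun hh => hu_d hh.symm, hconn.preconnected x u⟩
                    have hdu1 : G.dist x u ≠ 1 := fun hh =>
                      hud ((SimpleGraph.dist_eq_one_iff_adj.mp hh).symm)
                    have huz0 : G.dist u z ≠ 0 := by
                      refine SimpleGraph.dist_ne_zero_iff_ne_and_reachable.mpr
                        ⟨?_, hconn.preconnected u z⟩
                      intro hh
                      subst hh
                      exact hcz h1.symm
                    omega
                have hbig : (SimpleGraph.Walk.cons h1 (SimpleGraph.Walk.cons h q')).IsPath :=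
                  hq.cons hu_not
                have := pathlen _ hbig
                simp [SimpleGraph.Walk.length_cons] at this
                omega
              · have hd_not : d ∉ (SimpleGraph.Walk.cons h q').support := by
                  simp only [SimpleGraph.Walk.support_cons, List.mem_cons]
                  rintro (rfl | hdsup)
                  · exact hc_d rfl
                  · have e1 := dist_split (w := d) hconn (SimpleGraph.Walk.cons h q') hql
                      (by simp [hdsup])
                    have e2 := dist_split hconn q' hq'dist hdsup
                    have hcd1 : G.dist c d = 1 := SimpleGraph.dist_eq_one_iff_adj.mpr h2
                    have hxd0 : G.dist x d ≠ 0 :=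
                      SimpleGraph.dist_ne_zero_iff_ne_and_reachable.mpr
                        ⟨hxd, hconn.preconnected x d⟩
                    omega
                by_cases hvsup : v ∈ (SimpleGraph.Walk.cons h q').support
                · have e1 := dist_split hconn (SimpleGraph.Walk.cons h q') hql hvsup
                  have hcv2 : G.dist c v = 2 := by
                    have hle : G.dist c v ≤ 2 := by
                      have := SimpleGraph.dist_le
                        (SimpleGraph.Walk.cons h2 (SimpleGraph.Walk.cons h3 SimpleGraph.Walk.nil))
                      simpa using this
                    have h0 : G.dist c v ≠ 0 :=
                      SimpleGraph.dist_ne_zero_iff_ne_and_reachable.mpr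
                        ⟨hc_v, hconn.preconnected c v⟩
                    have hone : G.dist c v ≠ 1 := fun hh =>
                      hcv (SimpleGraph.dist_eq_one_iff_adj.mp hh)
                    omega
                  have hvz : v ≠ z := by intro hh; subst hh; exact hdz h3
                  have hvz0 : G.dist v z ≠ 0 :=
                    SimpleGraph.dist_ne_zero_iff_ne_and_reachable.mpr
                      ⟨hvz, hconn.preconnected v z⟩
                  have hvz1 : G.dist v z = 1 := by omega
                  have hadjvz : G.Adj v z := SimpleGraph.dist_eq_one_iff_adj.mp hvz1
                  have hzu : z ≠ u := by intro hh; subst hh; exact hcz h1.symm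
                  have huz : u ≠ z := fun hh => hzu hh.symm
                  have hcz' : c ≠ z := fun hh => hzc hh.symm
                  have hdz' : d ≠ z := fun hh => hzd hh.symm
                  have hbig : (SimpleGraph.Walk.cons h1 (SimpleGraph.Walk.cons h2
                      (SimpleGraph.Walk.cons h3 (SimpleGraph.Walk.cons hadjvz
                        SimpleGraph.Walk.nil)))).IsPath := by
                    simp [SimpleGraph.Walk.cons_isPath_iff, h1.ne, h2.ne, h3.ne, hadjvz.ne,
                      hu_d, hu_v, huz, hc_v, hcz', hdz']
                  have := pathlen _ hbig
                  simp [SimpleGraph.Walk.length_cons] at this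
                · have W1 : (SimpleGraph.Walk.cons h2.symm
                      (SimpleGraph.Walk.cons h q')).IsPath := hq.cons hd_not
                  have W2 : (SimpleGraph.Walk.cons h3.symm (SimpleGraph.Walk.cons h2.symm
                      (SimpleGraph.Walk.cons h q'))).IsPath := by
                    apply W1.cons
                    simp only [SimpleGraph.Walk.support_cons, List.mem_cons]
                    rintro (rfl | hvs)
                    · exact hd_v rfl
                    · exact hvsup (by simpa using hvs)
                  have := pathlen _ W2
                  simp [SimpleGraph.Walk.length_cons] at this
                  omega
          -- complement adjacencies
          have hccv : Gᶜ.Adj c v := by rw [SimpleGraph.compl_adj]; exact ⟨hc_v, hcv⟩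
          have hcvu : Gᶜ.Adj v u := by
            rw [SimpleGraph.compl_adj]
            exact ⟨fun hh => hu_v hh.symm, fun hh => huv' hh.symm⟩
          have hcud : Gᶜ.Adj u d := by rw [SimpleGraph.compl_adj]; exact ⟨hu_d, hud⟩
          have hccd : ¬Gᶜ.Adj c d := by
            rw [SimpleGraph.compl_adj]
            rintro ⟨-, hh⟩; exact hh h2
          -- the canonical complement path c - v - u - d
          set W0 : Gᶜ.Walk c d := SimpleGraph.Walk.cons hccv (SimpleGraph.Walk.cons hcvu
            (SimpleGraph.Walk.cons hcud SimpleGraph.Walk.nil)) with hW0def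
          have hcu' : c ≠ u := fun hh => hu_c hh.symm
          have hvu' : v ≠ u := fun hh => hu_v hh.symm
          have hvd' : v ≠ d := fun hh => hd_v hh.symm
          have hW0 : W0.IsPath := by
            rw [hW0def]
            simp [SimpleGraph.Walk.cons_isPath_iff, hc_v, hcu', hc_d, hvu', hvd', hu_d]
          have hdcd : Gᶜ.dist c d = 3 := by
            have hle : Gᶜ.dist c d ≤ 3 := by
              have := SimpleGraph.dist_le W0
              simpa [hW0def] using this
            have hreach : Gᶜ.Reachable c d := ⟨W0⟩
            obtain ⟨P, hP, hPl⟩ := hreach.exists_path_of_dist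
            cases P with
            | nil => exact absurd rfl hc_d
            | @cons _ x _ e q =>
              cases q with
              | nil => exact absurd e hccd
              | @cons _ y _ e2 r =>
                have hxc : x ≠ c := fun hh => (SimpleGraph.compl_adj G c x).mp e |>.1 hh.symm
                by_cases hr : r.length = 0
                · have hyd : y = d := SimpleGraph.Walk.eq_of_length_eq_zero hr
                  rw [hyd] at e2
                  exfalso
                  have hxd : x ≠ d := ((SimpleGraph.compl_adj G x d).mp e2).1
                  have hncx : ¬G.Adj c x := ((SimpleGraph.compl_adj G c x).mp e).2
                  have hndx : ¬G.Adj d x := fun hh =>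
                    ((SimpleGraph.compl_adj G x d).mp e2).2 hh.symm
                  rcases claimA x hxc hxd with hh | hh
                  · exact hncx hh
                  · exact hndx hh
                · have : 3 ≤ Gᶜ.dist c d := by
                    rw [← hPl]; simp [SimpleGraph.Walk.length_cons]; omega
                  omega
            -- unreachable? no: handled
          -- geodetic set {c, d}
          have geo : IsGeodetic Gᶜ {c, d} := by
            intro z
            refine ⟨c, by simp, d, by simp, ?_⟩
            by_cases hzc : z = c
            · exact ⟨W0, hW0, by rw [hdcd, hW0def]; simp, by simp [hW0def, hzc]⟩
            by_cases hzd : z = d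
            · exact ⟨W0, hW0, by rw [hdcd, hW0def]; simp, by simp [hW0def, hzd]⟩
            rcases claimA z hzc hzd with hA | hA
            · -- z is a leaf of c: path c - v - z - d
              have hzv : z ≠ v := fun hh => hcv (hh ▸ hA)
              have hnvz : ¬G.Adj v z := fun hh =>
                quad hA.symm h2 h3 hh.symm hzd hc_v
              have hnzd : ¬G.Adj z d := fun hh => tri hA hh h2
              have e2 : Gᶜ.Adj v z := by
                rw [SimpleGraph.compl_adj]; exact ⟨fun hh => hzv hh.symm, hnvz⟩
              have e3 : Gᶜ.Adj z d := by
                rw [SimpleGraph.compl_adj]; exact ⟨hzd, hnzd⟩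
              refine ⟨SimpleGraph.Walk.cons hccv (SimpleGraph.Walk.cons e2
                (SimpleGraph.Walk.cons e3 SimpleGraph.Walk.nil)), ?_, ?_, by simp⟩
              · have hvz' : v ≠ z := fun hh => hzv hh.symm
                have hcz2 : c ≠ z := hA.ne
                simp [SimpleGraph.Walk.cons_isPath_iff, hc_v, hcz2, hc_d, hvz', hvd', hzd]
              · rw [hdcd]; simp
            · -- z is a leaf of d: path c - z - u - d
              have hzu : z ≠ u := fun hh => hud ((hh ▸ hA : G.Adj d u).symm)
              have hncz : ¬G.Adj c z := fun hh => tri h2 hA hh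
              have hnzu : ¬G.Adj z u := fun hh =>
                quad h1 h2 hA hh.symm hu_d (fun hh2 => hzc hh2.symm)
              have e1 : Gᶜ.Adj c z := by
                rw [SimpleGraph.compl_adj]; exact ⟨fun hh => hzc hh.symm, hncz⟩
              have e2 : Gᶜ.Adj z u := by
                rw [SimpleGraph.compl_adj]; exact ⟨hzu, hnzu⟩
              refine ⟨SimpleGraph.Walk.cons e1 (SimpleGraph.Walk.cons e2
                (SimpleGraph.Walk.cons hcud SimpleGraph.Walk.nil)), ?_, ?_, by simp⟩
              · have hcz2 : c ≠ z := fun hh => hzc hh.symm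
                simp [SimpleGraph.Walk.cons_isPath_iff, hcz2, hcu', hc_d, hzu, hzd, hu_d]
              · rw [hdcd]; simp
          -- conclude
          have mem2 : 2 ∈ {n | ∃ S : Set V, IsGeodetic Gᶜ S ∧ S.ncard = n} :=
            ⟨{c, d}, geo, Set.ncard_pair hc_d⟩
          refine le_antisymm (Nat.sInf_le mem2) (le_csInf ⟨2, mem2⟩ ?_)
          rintro n ⟨S, hS, rfl⟩
          by_contra hlt
          push_neg at hlt
          have hsub : ∀ z : V, z ∈ S := by
            intro z
            obtain ⟨x, hx, y, hy, q, hq, hql, hzq⟩ := hS z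
            have hxy : x = y := by
              exact (Set.ncard_le_one S.toFinite).mp (by omega) x hx y hy
            subst hxy
            have hq0 : q.length = 0 := by
              rw [hql]; exact SimpleGraph.dist_self
            cases q with
            | nil =>
              simp at hzq
              subst hzq
              exact hx
            | cons _ _ => simp at hq0
          have hsubset : ({c, d} : Set V) ⊆ S := fun w _ => hsub w
          have h2le : 2 ≤ S.ncard := by
            calc 2 = ({c, d} : Set V).ncard := (Set.ncard_pair hc_d).symm
              _ ≤ S.ncard := Set.ncard_le_ncard hsubset S.toFinite
          omega
end

section
/- Let T be a tree with diameter greater than 3 that has a vertex of degree two. Then the geodetic number of the complement of T equals 3. -/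
open SimpleGraph

section Helpers

variable {V : Type*} {G : SimpleGraph V}

/-- A geodesic from `x` to `x` is trivial. -/
lemma loop_geo {x z : V} (p : G.Walk x x) (hl : p.length = G.dist x x)
    (hz : z ∈ p.support) : z = x := by
  rw [SimpleGraph.dist_self, SimpleGraph.Walk.length_eq_zero_iff] at hl
  rw [SimpleGraph.Walk.nil_iff_eq_nil] at hl
  subst hl
  simpa using hz

lemma walk_len1 {x y : V} (p : G.Walk x y) (h : p.length = 1) :
    p.support = [x, y] := by
  cases p with
  | nil => simp at h
  | cons h1 q =>
    cases q with
    | nil => rfl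
    | cons h2 r => simp [SimpleGraph.Walk.length_cons] at h

lemma walk_len2 {x y : V} (p : G.Walk x y) (h : p.length = 2) :
    ∃ m, G.Adj x m ∧ G.Adj m y ∧ p.support = [x, m, y] := by
  cases p with
  | nil => simp at h
  | cons h1 q =>
    cases q with
    | nil => simp [SimpleGraph.Walk.length_cons] at h
    | cons h2 r =>
      cases r with
      | nil => exact ⟨_, h1, h2, rfl⟩
      | cons h3 s => simp [SimpleGraph.Walk.length_cons] at h

/-- If some pair is at distance `> 3` and `x ~ y`, there is a vertex non-adjacent
to both `x` and `y` (and distinct from them). -/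
lemma exists_nonadj {x y u w : V} (hconn : G.Connected) (hxy : G.Adj x y)
    (hd : 3 < G.dist u w) : ∃ m, m ≠ x ∧ m ≠ y ∧ ¬G.Adj m x ∧ ¬G.Adj m y := by
  by_contra hc
  push_neg at hc
  have key : ∀ m : V, G.dist m x ≤ 1 ∨ G.dist m y ≤ 1 := by
    intro m
    by_cases h1 : m = x
    · left; simp [h1, SimpleGraph.dist_self]
    by_cases h2 : m = y
    · right; simp [h2, SimpleGraph.dist_self]
    by_cases h3 : G.Adj m x
    · left; exact le_of_eq (SimpleGraph.dist_eq_one_iff_adj.mpr h3)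
    · right; exact le_of_eq (SimpleGraph.dist_eq_one_iff_adj.mpr (hc m h1 h2 h3))
  have hxy1 : G.dist x y = 1 := SimpleGraph.dist_eq_one_iff_adj.mpr hxy
  have hyx1 : G.dist y x = 1 := SimpleGraph.dist_eq_one_iff_adj.mpr hxy.symm
  have t : ∀ a b : V, G.dist u a ≤ 1 → G.dist w b ≤ 1 → G.dist a b ≤ 1 → False := by
    intro a b h1 h2 h3
    have t1 : G.dist u w ≤ G.dist u a + G.dist a w := hconn.dist_triangle
    have t2 : G.dist a w ≤ G.dist a b + G.dist b w := hconn.dist_triangle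
    have t3 : G.dist b w = G.dist w b := SimpleGraph.dist_comm
    omega
  rcases key u with h | h <;> rcases key w with h' | h'
  · exact t x x h h' (by simp [SimpleGraph.dist_self])
  · exact t x y h h' (le_of_eq hxy1)
  · exact t y x h h' (le_of_eq hyx1)
  · exact t y y h h' (by simp [SimpleGraph.dist_self])

end Helpers

/-- If `T` is a tree with diameter greater than 3 having a vertex of degree two,
then the geodetic number of its complement is 3. -/
theorem geodeticNumber_compl_of_diam_gt_three {V : Type*} [Fintype V] (G : SimpleGraph V)
    (hT : G.IsTree) (hd : 3 < G.diam) (hdeg : ∃ v : V, (G.neighborSet v).ncard = 2) :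
    geodeticNumber Gᶜ = 3 := by
  classical
  have hconn := hT.isConnected
  have : Nonempty V := hconn.nonempty
  obtain ⟨u, w, huw⟩ := G.exists_dist_eq_diam
  have hd' : 3 < G.dist u w := huw ▸ hd
  -- ## Upper bound: an explicit geodetic set of size 3
  obtain ⟨v, hv⟩ := hdeg
  rw [Set.ncard_eq_two] at hv
  obtain ⟨a, b, hab, hset⟩ := hv
  have hva : G.Adj v a := by
    have : a ∈ G.neighborSet v := by rw [hset]; exact Set.mem_insert _ _
    exact this
  have hvb : G.Adj v b := by
    have : b ∈ G.neighborSet v := by rw [hset]; exact Set.mem_insert_of_mem _ rfl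
    exact this
  have hgeo : IsGeodetic Gᶜ ({v, a, b} : Set V) := by
    intro z
    by_cases hzv : z = v
    · exact ⟨v, by simp, v, by simp, SimpleGraph.Walk.nil, by simp, by simp [SimpleGraph.dist_self], by simp [hzv]⟩
    by_cases hza : z = a
    · exact ⟨a, by simp, a, by simp, SimpleGraph.Walk.nil, by simp, by simp [SimpleGraph.dist_self], by simp [hza]⟩
    by_cases hzb : z = b
    · exact ⟨b, by simp, b, by simp, SimpleGraph.Walk.nil, by simp, by simp [SimpleGraph.dist_self], by simp [hzb]⟩
    -- z is not a neighbor of v in G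
    have hnadjvz : ¬G.Adj v z := by
      intro h
      have : z ∈ G.neighborSet v := h
      rw [hset] at this
      rcases this with h | h
      · exact hza h
      · exact hzb h
    -- z is not adjacent to both a and b in G (tree has unique paths)
    have hnotboth : ¬(G.Adj z a ∧ G.Adj z b) := by
      rintro ⟨h1, h2⟩
      have hp1 : (SimpleGraph.Walk.cons h1 (SimpleGraph.Walk.cons hva.symm SimpleGraph.Walk.nil)).IsPath := by
        simp [SimpleGraph.Walk.isPath_def, hza, hzv, hva.ne']
      have hp2 : (SimpleGraph.Walk.cons h2 (SimpleGraph.Walk.cons hvb.symm SimpleGraph.Walk.nil)).IsPath := by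
        simp [SimpleGraph.Walk.isPath_def, hzb, hzv, hvb.ne']
      obtain ⟨q, -, huniq⟩ := hT.existsUnique_path z v
      have e := (huniq _ hp1).trans (huniq _ hp2).symm
      have hsupp := congrArg SimpleGraph.Walk.support e
      simp only [SimpleGraph.Walk.support_cons, SimpleGraph.Walk.support_nil,
        List.cons.injEq] at hsupp
      exact hab hsupp.2.1
    have key : ∀ c : V, c ∈ ({v, a, b} : Set V) → z ≠ c → G.Adj v c → ¬G.Adj z c →
        ∃ x ∈ ({v, a, b} : Set V), ∃ y ∈ ({v, a, b} : Set V),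
        ∃ p : Gᶜ.Walk x y, p.IsPath ∧ p.length = Gᶜ.dist x y ∧ z ∈ p.support := by
      intro c hcmem hzc hvc hnzc
      have hc1 : Gᶜ.Adj v z := by
        rw [SimpleGraph.compl_adj]
        exact ⟨fun h => hzv h.symm, hnadjvz⟩
      have hc2 : Gᶜ.Adj z c := by
        rw [SimpleGraph.compl_adj]
        exact ⟨hzc, hnzc⟩
      refine ⟨v, by simp, c, hcmem, SimpleGraph.Walk.cons hc1 (SimpleGraph.Walk.cons hc2 SimpleGraph.Walk.nil), ?_, ?_, by simp⟩
      · simp [SimpleGraph.Walk.isPath_def, hvc.ne, hzc, Ne.symm hzv]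
      · have hle : Gᶜ.dist v c ≤ 2 := by
          simpa using SimpleGraph.dist_le
            (SimpleGraph.Walk.cons hc1 (SimpleGraph.Walk.cons hc2 SimpleGraph.Walk.nil))
        have hne0 : Gᶜ.dist v c ≠ 0 :=
          SimpleGraph.dist_ne_zero_iff_ne_and_reachable.mpr
            ⟨hvc.ne, ⟨SimpleGraph.Walk.cons hc1 (SimpleGraph.Walk.cons hc2 SimpleGraph.Walk.nil)⟩⟩
        have hne1 : Gᶜ.dist v c ≠ 1 := by
          intro h
          have := SimpleGraph.dist_eq_one_iff_adj.mp h
          rw [SimpleGraph.compl_adj] at this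
          exact this.2 hvc
        simp only [SimpleGraph.Walk.length_cons, SimpleGraph.Walk.length_nil]
        omega
    rcases not_and_or.mp hnotboth with h | h
    · exact key a (by simp) hza hva h
    · exact key b (by simp) hzb hvb h
  have hcard3 : ({v, a, b} : Set V).ncard = 3 := by
    rw [Set.ncard_eq_three]
    exact ⟨v, a, b, hva.ne, hvb.ne, hab, rfl⟩
  -- ## Lower bound
  have hlow : ∀ n ∈ {n | ∃ S : Set V, IsGeodetic Gᶜ S ∧ S.ncard = n}, 3 ≤ n := by
    rintro n ⟨S, hS, rfl⟩
    by_contra hn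
    push_neg at hn
    have hfin : S.Finite := Set.toFinite S
    have hnonempty : S.Nonempty := by
      obtain ⟨x, hx, -⟩ := hS u
      exact ⟨x, hx⟩
    have hpos : 0 < S.ncard := (Set.ncard_pos hfin).mpr hnonempty
    interval_cases h : S.ncard
    · -- ncard = 1
      rw [Set.ncard_eq_one] at h
      obtain ⟨x, rfl⟩ := h
      have hval : ∀ z : V, z = x := by
        intro z
        obtain ⟨x', hx', y', hy', p, hp, hl, hz⟩ := hS z
        simp only [Set.mem_singleton_iff] at hx' hy'
        subst hx'; subst hy'
        exact loop_geo p hl hz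
      have := hval u
      have := hval w
      subst this
      rw [hval u, SimpleGraph.dist_self] at hd'
      omega
    · -- ncard = 2
      rw [Set.ncard_eq_two] at h
      obtain ⟨x, y, hxyne, rfl⟩ := h
      by_cases hadj : G.Adj x y
      · -- x,y adjacent in G, so Gᶜ.dist x y = 2 and every other vertex is a middle vertex
        obtain ⟨m, hm1, hm2, hm3, hm4⟩ := exists_nonadj hconn hadj hd'
        have hmx : Gᶜ.Adj x m := by
          rw [SimpleGraph.compl_adj]
          exact ⟨fun h2 => hm1 h2.symm, fun h2 => hm3 h2.symm⟩
        have hmy : Gᶜ.Adj m y := by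
          rw [SimpleGraph.compl_adj]
          exact ⟨hm2, hm4⟩
        have hdist2 : Gᶜ.dist x y = 2 := by
          have hle : Gᶜ.dist x y ≤ 2 := by
            simpa using SimpleGraph.dist_le
              (SimpleGraph.Walk.cons hmx (SimpleGraph.Walk.cons hmy SimpleGraph.Walk.nil))
          have hne0 : Gᶜ.dist x y ≠ 0 :=
            SimpleGraph.dist_ne_zero_iff_ne_and_reachable.mpr
              ⟨hxyne, ⟨SimpleGraph.Walk.cons hmx (SimpleGraph.Walk.cons hmy SimpleGraph.Walk.nil)⟩⟩
          have hne1 : Gᶜ.dist x y ≠ 1 := by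
            intro h2
            have := SimpleGraph.dist_eq_one_iff_adj.mp h2
            rw [SimpleGraph.compl_adj] at this
            exact this.2 hadj
          omega
        have hkey : ∀ z : V, z ≠ x → z ≠ y → ¬G.Adj z x ∧ ¬G.Adj z y := by
          intro z hzx hzy
          obtain ⟨x', hx', y', hy', p, hp, hl, hz⟩ := hS z
          simp only [Set.mem_insert_iff, Set.mem_singleton_iff] at hx' hy'
          rcases hx' with rfl | rfl <;> rcases hy' with rfl | rfl
          · exact absurd (loop_geo p hl hz) hzx
          · rw [hdist2] at hl
            obtain ⟨m', a1, a2, hsup⟩ := walk_len2 p hl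
            rw [hsup] at hz
            simp at hz
            rcases hz with rfl | rfl | rfl
            · exact absurd rfl hzx
            · rw [SimpleGraph.compl_adj] at a1 a2
              exact ⟨fun h2 => a1.2 h2.symm, a2.2⟩
            · exact absurd rfl hzy
          · rw [SimpleGraph.dist_comm, hdist2] at hl
            obtain ⟨m', a1, a2, hsup⟩ := walk_len2 p hl
            rw [hsup] at hz
            simp at hz
            rcases hz with rfl | rfl | rfl
            · exact absurd rfl hzy
            · rw [SimpleGraph.compl_adj] at a1 a2
              exact ⟨a2.2, fun h2 => a1.2 h2.symm⟩
            · exact absurd rfl hzx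
          · exact absurd (loop_geo p hl hz) hzy
        -- every vertex reachable from x stays in {x, y}
        have hcl : ∀ (s t : V) (q : G.Walk s t), (s = x ∨ s = y) → (t = x ∨ t = y) := by
          intro s t q
          induction q with
          | nil => exact id
          | @cons s' b' t' h q ih =>
            intro hs
            apply ih
            by_contra hb
            push_neg at hb
            obtain ⟨hb1, hb2⟩ := hb
            have hk := hkey b' hb1 hb2
            rcases hs with rfl | rfl
            · exact hk.1 h.symm
            · exact hk.2 h.symm
        obtain ⟨qu⟩ := hconn.preconnected x u
        obtain ⟨qw⟩ := hconn.preconnected x w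
        have hu2 := hcl x u qu (Or.inl rfl)
        have hw2 := hcl x w qw (Or.inl rfl)
        have hd1 : G.dist x y = 1 := SimpleGraph.dist_eq_one_iff_adj.mpr hadj
        have hd1' : G.dist y x = 1 := SimpleGraph.dist_eq_one_iff_adj.mpr hadj.symm
        rcases hu2 with h4 | h4 <;> rcases hw2 with h5 | h5 <;> rw [h4, h5] at hd'
        · rw [SimpleGraph.dist_self] at hd'; omega
        · rw [hd1] at hd'; omega
        · rw [hd1'] at hd'; omega
        · rw [SimpleGraph.dist_self] at hd'; omega
      · -- x,y non-adjacent in G : Gᶜ.dist x y = 1, so V ⊆ {x, y}, contradiction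
        have hcadj : Gᶜ.Adj x y := by
          rw [SimpleGraph.compl_adj]; exact ⟨hxyne, hadj⟩
        have hdist1 : Gᶜ.dist x y = 1 := SimpleGraph.dist_eq_one_iff_adj.mpr hcadj
        have hall : ∀ z : V, z = x ∨ z = y := by
          intro z
          obtain ⟨x', hx', y', hy', p, hp, hl, hz⟩ := hS z
          simp only [Set.mem_insert_iff, Set.mem_singleton_iff] at hx' hy'
          rcases hx' with rfl | rfl <;> rcases hy' with rfl | rfl
          · exact Or.inl (loop_geo p hl hz)
          · rw [hdist1] at hl
            rw [walk_len1 p hl] at hz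
            simpa using hz
          · rw [SimpleGraph.dist_comm, hdist1] at hl
            rw [walk_len1 p hl] at hz
            simp at hz
            tauto
          · exact Or.inr (loop_geo p hl hz)
        obtain ⟨p, hp, hl⟩ := hconn.exists_path_of_dist u w
        have hnodup := hp.support_nodup
        have hsub : p.support.toFinset ⊆ ({x, y} : Finset V) := by
          intro s hs
          simp only [Finset.mem_insert, Finset.mem_singleton]
          exact hall s
        have hcard := Finset.card_le_card hsub
        rw [List.toFinset_card_of_nodup hnodup] at hcard
        have hxy2 : ({x, y} : Finset V).card ≤ 2 := by
          apply le_trans (Finset.card_insert_le _ _)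
          simp
        have hlen := SimpleGraph.Walk.length_support p
        omega
  apply le_antisymm
  · exact Nat.sInf_le ⟨{v, a, b}, hgeo, hcard3⟩
  · exact le_csInf ⟨3, {v, a, b}, hgeo, hcard3⟩ hlow
end

section
/- Let T be a tree with diameter at least 5 and no vertex of degree two. Then the geodetic number of the complement of T equals 4. -/
open SimpleGraph

namespace GeoAux

variable {V : Type*} {G : SimpleGraph V}

lemma adj_dist_le_one {x y : V} (h : G.Adj x y) : G.dist x y ≤ 1 := by
  simpa using G.dist_le (Walk.cons h Walk.nil)

lemma ne_of_one_le_dist {x y : V} (h : 1 ≤ G.dist x y) : x ≠ y := by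
  rintro rfl
  simp [SimpleGraph.dist_self] at h

lemma far_exists (hc : G.Connected) {u v x y : V} (hd5 : 5 ≤ G.dist u v)
    (hxy : G.Adj x y) : ∃ w, 2 ≤ G.dist w x ∧ 2 ≤ G.dist w y := by
  by_contra h
  push_neg at h
  have hu : G.dist u x ≤ 1 ∨ G.dist u y ≤ 1 := by
    rcases le_or_gt 2 (G.dist u x) with h1 | h1
    · right; have := h u h1; omega
    · left; omega
  have hv : G.dist v x ≤ 1 ∨ G.dist v y ≤ 1 := by
    rcases le_or_gt 2 (G.dist v x) with h1 | h1
    · right; have := h v h1; omega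
    · left; omega
  have hxy1 : G.dist x y ≤ 1 := adj_dist_le_one hxy
  have hyx1 : G.dist y x ≤ 1 := adj_dist_le_one hxy.symm
  have cxv : G.dist x v = G.dist v x := dist_comm
  have cyv : G.dist y v = G.dist v y := dist_comm
  have t1 : G.dist u v ≤ G.dist u x + G.dist x v := hc.dist_triangle
  have t2 : G.dist u v ≤ G.dist u y + G.dist y v := hc.dist_triangle
  have t3 : G.dist x v ≤ G.dist x y + G.dist y v := hc.dist_triangle
  have t4 : G.dist y v ≤ G.dist y x + G.dist x v := hc.dist_triangle
  rcases hu with h1 | h1 <;> rcases hv with h2 | h2 <;> omega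

lemma compl_adj_of {x y : V} (hne : x ≠ y) (hna : ¬G.Adj x y) : Gᶜ.Adj x y :=
  (G.compl_adj x y).mpr ⟨hne, hna⟩

lemma compl_dist_eq_two (hc : G.Connected) {u v x y : V} (hd5 : 5 ≤ G.dist u v)
    (hxy : G.Adj x y) : Gᶜ.dist x y = 2 := by
  obtain ⟨w, hwx, hwy⟩ := far_exists hc hd5 hxy
  have h1 : Gᶜ.Adj x w := by
    refine compl_adj_of (fun he => ?_) (fun ha => ?_)
    · rw [he] at hwx; simp [SimpleGraph.dist_self] at hwx
    · have := adj_dist_le_one ha.symm; omega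
  have h2 : Gᶜ.Adj w y := by
    refine compl_adj_of (fun he => ?_) (fun ha => ?_)
    · rw [he] at hwy; simp [SimpleGraph.dist_self] at hwy
    · have := adj_dist_le_one ha; omega
  have hle : Gᶜ.dist x y ≤ 2 := by
    simpa using Gᶜ.dist_le (Walk.cons h1 (Walk.cons h2 Walk.nil))
  have hpos : 0 < Gᶜ.dist x y :=
    Reachable.pos_dist_of_ne ⟨Walk.cons h1 (Walk.cons h2 Walk.nil)⟩ hxy.ne
  have hne1 : Gᶜ.dist x y ≠ 1 := by
    intro h1'
    have : Gᶜ.Adj x y := dist_eq_one_iff_adj.mp h1'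
    exact ((G.compl_adj x y).mp this).2 hxy
  omega

lemma mid_geodesic (hc : G.Connected) {u v x y z : V} (hd5 : 5 ≤ G.dist u v)
    (hxy : G.Adj x y) (hzx : ¬G.Adj z x) (hzy : ¬G.Adj z y)
    (hzx' : z ≠ x) (hzy' : z ≠ y) :
    ∃ p : Gᶜ.Walk x y, p.IsPath ∧ p.length = Gᶜ.dist x y ∧ z ∈ p.support := by
  have h1 : Gᶜ.Adj x z := compl_adj_of hzx'.symm (fun h => hzx h.symm)
  have h2 : Gᶜ.Adj z y := compl_adj_of hzy' hzy
  refine ⟨Walk.cons h1 (Walk.cons h2 Walk.nil), ?_, ?_, by simp⟩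
  · simp [Walk.isPath_def, hxy.ne, hzx'.symm, hzy']
  · simp [compl_dist_eq_two hc hd5 hxy]

lemma all_eq_aux {a b : V} (ha : ∀ z, G.Adj a z → z = b)
    (hb : ∀ z, G.Adj b z → z = a) :
    ∀ (n : ℕ) (x : V) (p : G.Walk x a), p.length = n → x = a ∨ x = b := by
  intro n
  induction n with
  | zero =>
    intro x p hl
    cases p with
    | nil => exact Or.inl rfl
    | cons h q => simp [Walk.length_cons] at hl
  | succ n ih =>
    intro x p hl
    cases p with
    | nil => exact Or.inl rfl
    | cons h q =>
      have hq : q.length = n := by simp [Walk.length_cons] at hl; omega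
      rcases ih _ q hq with rfl | rfl
      · exact Or.inr (ha _ h.symm)
      · exact Or.inl (hb _ h.symm)

lemma all_eq_of (hc : G.Connected) {a b : V} (ha : ∀ z, G.Adj a z → z = b)
    (hb : ∀ z, G.Adj b z → z = a) (v : V) : v = a ∨ v = b := by
  obtain ⟨p⟩ := hc v a
  exact all_eq_aux ha hb p.length v p rfl

lemma exists_outside [DecidableEq V] (hc : G.Connected) {u v : V} (hd5 : 5 ≤ G.dist u v)
    (s : Set V) (hfin : s.Finite) (hs : s.ncard ≤ 3) : ∃ z, z ∉ s := by
  obtain ⟨p, hlen⟩ := (hc u v).exists_walk_length_eq_dist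
  have hp : p.IsPath := p.isPath_of_length_eq_dist hlen
  by_contra h
  push_neg at h
  have hsub : ↑p.support.toFinset ⊆ s := fun z _ => h z
  have hcard : p.support.toFinset.card ≤ s.ncard := by
    have h2 := Set.ncard_le_ncard hsub hfin
    rwa [Set.ncard_coe_finset] at h2
  have hnodup := hp.support_nodup
  have : p.support.toFinset.card = p.support.length := List.toFinset_card_of_nodup hnodup
  have hl : p.support.length = p.length + 1 := Walk.length_support p
  omega

lemma no_pendant [DecidableEq V] (hc : G.Connected) {u v a b : V} (hd5 : 5 ≤ G.dist u v)
    (ha : ∀ z, G.Adj a z → z = b) (hb : ∀ z, G.Adj b z → z = a) : False := by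
  have hcard : ({a, b} : Set V).ncard ≤ 3 := by
    have h1 := Set.ncard_insert_le a ({b} : Set V)
    simp only [Set.ncard_singleton] at h1
    omega
  obtain ⟨z, hz⟩ := exists_outside hc hd5 {a, b} (Set.toFinite _) hcard
  rcases all_eq_of hc ha hb z with rfl | rfl <;> simp at hz


/-- Every geodesic in the complement has length ≤ 2; an interior vertex of
such a geodesic is a common non-neighbour of a `G`-edge inside `S`. -/
lemma factA (hc : G.Connected) {u v : V} (hd5 : 5 ≤ G.dist u v) {S : Set V}
    (hS : ∀ z : V, ∃ x ∈ S, ∃ y ∈ S, ∃ p : Gᶜ.Walk x y,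
      p.IsPath ∧ p.length = Gᶜ.dist x y ∧ z ∈ p.support)
    {z : V} (hz : z ∉ S) :
    ∃ x ∈ S, ∃ y ∈ S, G.Adj x y ∧ ¬G.Adj z x ∧ ¬G.Adj z y := by
  obtain ⟨x, hx, y, hy, p, hpath, hlen, hsup⟩ := hS z
  have hzx : z ≠ x := fun h => hz (h ▸ hx)
  have hzy : z ≠ y := fun h => hz (h ▸ hy)
  by_cases hxyeq : x = y
  · subst hxyeq
    have h0 : Gᶜ.dist x x = 0 := SimpleGraph.dist_self
    rw [h0] at hlen
    cases p with
    | nil => simp at hsup; exact absurd hsup hzx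
    | cons h q => simp [Walk.length_cons] at hlen
  by_cases hcadj : Gᶜ.Adj x y
  · have h1 : Gᶜ.dist x y = 1 := dist_eq_one_iff_adj.mpr hcadj
    rw [h1] at hlen
    cases p with
    | nil => simp at hlen
    | cons h q =>
      cases q with
      | nil => simp at hsup; rcases hsup with rfl | rfl <;> [exact absurd rfl hzx; exact absurd rfl hzy]
      | cons h' r => simp [Walk.length_cons] at hlen
  · have hadj : G.Adj x y := by
      by_contra hna
      exact hcadj (compl_adj_of hxyeq hna)
    have h2 : Gᶜ.dist x y = 2 := compl_dist_eq_two hc hd5 hadj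
    rw [h2] at hlen
    cases p with
    | nil => simp at hlen
    | cons h q =>
      cases q with
      | nil => simp [Walk.length_cons] at hlen
      | cons h' r =>
        cases r with
        | nil =>
          simp at hsup
          rcases hsup with rfl | rfl | rfl
          · exact absurd rfl hzx
          · refine ⟨x, hx, y, hy, hadj, ?_, ?_⟩
            · exact fun ha => ((G.compl_adj x z).mp h).2 ha.symm
            · exact fun ha => ((G.compl_adj z y).mp h').2 ha
          · exact absurd rfl hzy
        | cons h'' t => simp [Walk.length_cons] at hlen

lemma pair_cases {a b c x y : V} (hx : x ∈ ({a, b, c} : Set V))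
    (hy : y ∈ ({a, b, c} : Set V)) (hxy : G.Adj x y) :
    (x = a ∧ y = b) ∨ (x = b ∧ y = a) ∨ (x = b ∧ y = c) ∨ (x = c ∧ y = b) ∨
      (x = a ∧ y = c) ∨ (x = c ∧ y = a) := by
  simp only [Set.mem_insert_iff, Set.mem_singleton_iff] at hx hy
  rcases hx with rfl | rfl | rfl <;> rcases hy with rfl | rfl | rfl <;>
    first
      | exact absurd rfl hxy.ne
      | tauto


lemma lower_bound [Fintype V] [DecidableEq V] (hT : G.IsTree) {u v : V}
    (hd5 : 5 ≤ G.dist u v) (hdeg : ∀ w : V, (G.neighborSet w).ncard ≠ 2)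
    {S : Set V}
    (hS : ∀ z : V, ∃ x ∈ S, ∃ y ∈ S, ∃ p : Gᶜ.Walk x y,
      p.IsPath ∧ p.length = Gᶜ.dist x y ∧ z ∈ p.support) :
    4 ≤ S.ncard := by
  have hc := hT.isConnected
  by_contra hlt
  push_neg at hlt
  have h3 : S.ncard ≤ 3 := by omega
  have hfin : S.Finite := Set.toFinite S
  obtain ⟨z0, hz0⟩ := exists_outside hc hd5 S hfin h3
  obtain ⟨x0, hx0, y0, hy0, hxy0, -, -⟩ := factA hc hd5 hS hz0
  have h2 : 2 ≤ S.ncard := by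
    have hsub : ({x0, y0} : Set V) ⊆ S := by
      rw [Set.insert_subset_iff, Set.singleton_subset_iff]; exact ⟨hx0, hy0⟩
    have hle := Set.ncard_le_ncard hsub hfin
    rwa [Set.ncard_pair hxy0.ne] at hle
  have h23 : S.ncard = 2 ∨ S.ncard = 3 := by omega
  rcases h23 with h | h
  · obtain ⟨a, b, hab, rfl⟩ := Set.ncard_eq_two.mp h
    simp only [Set.mem_insert_iff, Set.mem_singleton_iff] at hx0 hy0
    have hGab : G.Adj a b := by
      rcases hx0 with rfl | rfl <;> rcases hy0 with rfl | rfl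
      · exact absurd rfl hxy0.ne
      · exact hxy0
      · exact hxy0.symm
      · exact absurd rfl hxy0.ne
    have hNa : ∀ w, G.Adj a w → w = b := by
      intro w hw
      by_contra hwb
      have hwa : w ≠ a := fun he => hw.ne he.symm
      have hwS : w ∉ ({a, b} : Set V) := by simp [hwa, hwb]
      obtain ⟨x, hx, y, hy, hxy, hwx, hwy⟩ := factA hc hd5 hS hwS
      simp only [Set.mem_insert_iff, Set.mem_singleton_iff] at hx hy
      rcases hx with rfl | rfl
      · exact hwx hw.symm
      · rcases hy with rfl | rfl
        · exact hwy hw.symm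
        · exact absurd rfl hxy.ne
    have hNb : ∀ w, G.Adj b w → w = a := by
      intro w hw
      by_contra hwa
      have hwb : w ≠ b := fun he => hw.ne he.symm
      have hwS : w ∉ ({a, b} : Set V) := by simp [hwa, hwb]
      obtain ⟨x, hx, y, hy, hxy, hwx, hwy⟩ := factA hc hd5 hS hwS
      simp only [Set.mem_insert_iff, Set.mem_singleton_iff] at hx hy
      rcases hx with rfl | rfl
      · rcases hy with rfl | rfl
        · exact absurd rfl hxy.ne
        · exact hwy hw.symm
      · exact hwx hw.symm
    exact no_pendant hc hd5 hNa hNb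
  · obtain ⟨a, b, c, hab, hac, hbc, rfl⟩ := Set.ncard_eq_three.mp h
    by_cases Hab : G.Adj a b <;> by_cases Hbc : G.Adj b c <;> by_cases Hac : G.Adj a c
    · -- triangle
      have hp1 : (Walk.cons Hac Walk.nil : G.Walk a c).IsPath := by
        simp [Walk.isPath_def, hac]
      have hp2 : (Walk.cons Hab (Walk.cons Hbc Walk.nil) : G.Walk a c).IsPath := by
        simp [Walk.isPath_def, hab, hac, hbc]
      obtain ⟨q, -, huniq⟩ := hT.existsUnique_path a c
      have he := (huniq _ hp1).trans (huniq _ hp2).symm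
      have hle := congrArg Walk.length he
      simp [Walk.length_cons] at hle
    · -- Hab, Hbc, ¬Hac : center b
      have hNb : G.neighborSet b = {a, c} := by
        ext w
        simp only [mem_neighborSet, Set.mem_insert_iff, Set.mem_singleton_iff]
        constructor
        · intro hw
          by_cases hwS : w ∈ ({a, b, c} : Set V)
          · simp only [Set.mem_insert_iff, Set.mem_singleton_iff] at hwS
            rcases hwS with rfl | rfl | rfl
            · exact Or.inl rfl
            · exact absurd rfl hw.ne
            · exact Or.inr rfl
          · obtain ⟨x, hx, y, hy, hxy, hwx, hwy⟩ := factA hc hd5 hS hwS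
            rcases pair_cases hx hy hxy with
              ⟨rfl, rfl⟩ | ⟨rfl, rfl⟩ | ⟨rfl, rfl⟩ | ⟨rfl, rfl⟩ | ⟨rfl, rfl⟩ | ⟨rfl, rfl⟩
            · exact absurd hw.symm hwy
            · exact absurd hw.symm hwx
            · exact absurd hw.symm hwx
            · exact absurd hw.symm hwy
            · exact absurd hxy Hac
            · exact absurd hxy.symm Hac
        · rintro (rfl | rfl)
          · exact Hab.symm
          · exact Hbc
      exact hdeg b (by rw [hNb, Set.ncard_pair hac])
    · -- Hab, ¬Hbc, Hac : center a
      have hNa : G.neighborSet a = {b, c} := by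
        ext w
        simp only [mem_neighborSet, Set.mem_insert_iff, Set.mem_singleton_iff]
        constructor
        · intro hw
          by_cases hwS : w ∈ ({a, b, c} : Set V)
          · simp only [Set.mem_insert_iff, Set.mem_singleton_iff] at hwS
            rcases hwS with rfl | rfl | rfl
            · exact absurd rfl hw.ne
            · exact Or.inl rfl
            · exact Or.inr rfl
          · obtain ⟨x, hx, y, hy, hxy, hwx, hwy⟩ := factA hc hd5 hS hwS
            rcases pair_cases hx hy hxy with
              ⟨rfl, rfl⟩ | ⟨rfl, rfl⟩ | ⟨rfl, rfl⟩ | ⟨rfl, rfl⟩ | ⟨rfl, rfl⟩ | ⟨rfl, rfl⟩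
            · exact absurd hw.symm hwx
            · exact absurd hw.symm hwy
            · exact absurd hxy Hbc
            · exact absurd hxy.symm Hbc
            · exact absurd hw.symm hwx
            · exact absurd hw.symm hwy
        · rintro (rfl | rfl)
          · exact Hab
          · exact Hac
      exact hdeg a (by rw [hNa, Set.ncard_pair hbc])
    · -- Hab only : pendant pair a b
      have hNa : ∀ w, G.Adj a w → w = b := by
        intro w hw
        by_cases hwS : w ∈ ({a, b, c} : Set V)
        · simp only [Set.mem_insert_iff, Set.mem_singleton_iff] at hwS
          rcases hwS with rfl | rfl | rfl
          · exact absurd rfl hw.ne.symm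
          · rfl
          · exact absurd hw Hac
        · obtain ⟨x, hx, y, hy, hxy, hwx, hwy⟩ := factA hc hd5 hS hwS
          rcases pair_cases hx hy hxy with
            ⟨rfl, rfl⟩ | ⟨rfl, rfl⟩ | ⟨rfl, rfl⟩ | ⟨rfl, rfl⟩ | ⟨rfl, rfl⟩ | ⟨rfl, rfl⟩
          · exact absurd hw.symm hwx
          · exact absurd hw.symm hwy
          · exact absurd hxy Hbc
          · exact absurd hxy.symm Hbc
          · exact absurd hxy Hac
          · exact absurd hxy.symm Hac
      have hNb : ∀ w, G.Adj b w → w = a := by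
        intro w hw
        by_cases hwS : w ∈ ({a, b, c} : Set V)
        · simp only [Set.mem_insert_iff, Set.mem_singleton_iff] at hwS
          rcases hwS with rfl | rfl | rfl
          · rfl
          · exact absurd rfl hw.ne.symm
          · exact absurd hw Hbc
        · obtain ⟨x, hx, y, hy, hxy, hwx, hwy⟩ := factA hc hd5 hS hwS
          rcases pair_cases hx hy hxy with
            ⟨rfl, rfl⟩ | ⟨rfl, rfl⟩ | ⟨rfl, rfl⟩ | ⟨rfl, rfl⟩ | ⟨rfl, rfl⟩ | ⟨rfl, rfl⟩
          · exact absurd hw.symm hwy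
          · exact absurd hw.symm hwx
          · exact absurd hxy Hbc
          · exact absurd hxy.symm Hbc
          · exact absurd hxy Hac
          · exact absurd hxy.symm Hac
      exact no_pendant hc hd5 hNa hNb
    · -- ¬Hab, Hbc, Hac : center c
      have hNc : G.neighborSet c = {a, b} := by
        ext w
        simp only [mem_neighborSet, Set.mem_insert_iff, Set.mem_singleton_iff]
        constructor
        · intro hw
          by_cases hwS : w ∈ ({a, b, c} : Set V)
          · simp only [Set.mem_insert_iff, Set.mem_singleton_iff] at hwS
            rcases hwS with rfl | rfl | rfl
            · exact Or.inl rfl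
            · exact Or.inr rfl
            · exact absurd rfl hw.ne
          · obtain ⟨x, hx, y, hy, hxy, hwx, hwy⟩ := factA hc hd5 hS hwS
            rcases pair_cases hx hy hxy with
              ⟨rfl, rfl⟩ | ⟨rfl, rfl⟩ | ⟨rfl, rfl⟩ | ⟨rfl, rfl⟩ | ⟨rfl, rfl⟩ | ⟨rfl, rfl⟩
            · exact absurd hxy Hab
            · exact absurd hxy.symm Hab
            · exact absurd hw.symm hwy
            · exact absurd hw.symm hwx
            · exact absurd hw.symm hwy
            · exact absurd hw.symm hwx
        · rintro (rfl | rfl)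
          · exact Hac.symm
          · exact Hbc.symm
      exact hdeg c (by rw [hNc, Set.ncard_pair hab])
    · -- Hbc only : pendant pair b c
      have hNb : ∀ w, G.Adj b w → w = c := by
        intro w hw
        by_cases hwS : w ∈ ({a, b, c} : Set V)
        · simp only [Set.mem_insert_iff, Set.mem_singleton_iff] at hwS
          rcases hwS with rfl | rfl | rfl
          · exact absurd hw.symm Hab
          · exact absurd rfl hw.ne.symm
          · rfl
        · obtain ⟨x, hx, y, hy, hxy, hwx, hwy⟩ := factA hc hd5 hS hwS
          rcases pair_cases hx hy hxy with
            ⟨rfl, rfl⟩ | ⟨rfl, rfl⟩ | ⟨rfl, rfl⟩ | ⟨rfl, rfl⟩ | ⟨rfl, rfl⟩ | ⟨rfl, rfl⟩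
          · exact absurd hxy Hab
          · exact absurd hxy.symm Hab
          · exact absurd hw.symm hwx
          · exact absurd hw.symm hwy
          · exact absurd hxy Hac
          · exact absurd hxy.symm Hac
      have hNc : ∀ w, G.Adj c w → w = b := by
        intro w hw
        by_cases hwS : w ∈ ({a, b, c} : Set V)
        · simp only [Set.mem_insert_iff, Set.mem_singleton_iff] at hwS
          rcases hwS with rfl | rfl | rfl
          · exact absurd hw.symm Hac
          · rfl
          · exact absurd rfl hw.ne.symm
        · obtain ⟨x, hx, y, hy, hxy, hwx, hwy⟩ := factA hc hd5 hS hwS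
          rcases pair_cases hx hy hxy with
            ⟨rfl, rfl⟩ | ⟨rfl, rfl⟩ | ⟨rfl, rfl⟩ | ⟨rfl, rfl⟩ | ⟨rfl, rfl⟩ | ⟨rfl, rfl⟩
          · exact absurd hxy Hab
          · exact absurd hxy.symm Hab
          · exact absurd hw.symm hwy
          · exact absurd hw.symm hwx
          · exact absurd hxy Hac
          · exact absurd hxy.symm Hac
      exact no_pendant hc hd5 hNb hNc
    · -- Hac only : pendant pair a c
      have hNa : ∀ w, G.Adj a w → w = c := by
        intro w hw
        by_cases hwS : w ∈ ({a, b, c} : Set V)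
        · simp only [Set.mem_insert_iff, Set.mem_singleton_iff] at hwS
          rcases hwS with rfl | rfl | rfl
          · exact absurd rfl hw.ne.symm
          · exact absurd hw Hab
          · rfl
        · obtain ⟨x, hx, y, hy, hxy, hwx, hwy⟩ := factA hc hd5 hS hwS
          rcases pair_cases hx hy hxy with
            ⟨rfl, rfl⟩ | ⟨rfl, rfl⟩ | ⟨rfl, rfl⟩ | ⟨rfl, rfl⟩ | ⟨rfl, rfl⟩ | ⟨rfl, rfl⟩
          · exact absurd hxy Hab
          · exact absurd hxy.symm Hab
          · exact absurd hxy Hbc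
          · exact absurd hxy.symm Hbc
          · exact absurd hw.symm hwx
          · exact absurd hw.symm hwy
      have hNc : ∀ w, G.Adj c w → w = a := by
        intro w hw
        by_cases hwS : w ∈ ({a, b, c} : Set V)
        · simp only [Set.mem_insert_iff, Set.mem_singleton_iff] at hwS
          rcases hwS with rfl | rfl | rfl
          · rfl
          · exact absurd hw.symm Hbc
          · exact absurd rfl hw.ne.symm
        · obtain ⟨x, hx, y, hy, hxy, hwx, hwy⟩ := factA hc hd5 hS hwS
          rcases pair_cases hx hy hxy with
            ⟨rfl, rfl⟩ | ⟨rfl, rfl⟩ | ⟨rfl, rfl⟩ | ⟨rfl, rfl⟩ | ⟨rfl, rfl⟩ | ⟨rfl, rfl⟩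
          · exact absurd hxy Hab
          · exact absurd hxy.symm Hab
          · exact absurd hxy Hbc
          · exact absurd hxy.symm Hbc
          · exact absurd hw.symm hwy
          · exact absurd hw.symm hwx
      exact no_pendant hc hd5 hNa hNc
    · -- no edges
      rcases pair_cases hx0 hy0 hxy0 with
        ⟨rfl, rfl⟩ | ⟨rfl, rfl⟩ | ⟨rfl, rfl⟩ | ⟨rfl, rfl⟩ | ⟨rfl, rfl⟩ | ⟨rfl, rfl⟩
      · exact Hab hxy0
      · exact Hab hxy0.symm
      · exact Hbc hxy0
      · exact Hbc hxy0.symm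
      · exact Hac hxy0
      · exact Hac hxy0.symm

end GeoAux

open GeoAux in
/-- If `T` is a tree with diameter at least 5 and no vertex of degree two,
then the geodetic number of its complement is 4. -/
theorem geodeticNumber_compl_of_diam_ge_five {V : Type*} [Fintype V] (G : SimpleGraph V)
    (hT : G.IsTree) (hd : 5 ≤ G.diam) (hdeg : ∀ v : V, (G.neighborSet v).ncard ≠ 2) :
    geodeticNumber Gᶜ = 4 := by
  classical
  have hc := hT.isConnected
  have hne : Nonempty V := hc.nonempty
  obtain ⟨u, v, huv⟩ := G.exists_dist_eq_diam
  have hd5 : 5 ≤ G.dist u v := by rw [huv]; exact hd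
  obtain ⟨p, hlen⟩ := (hc u v).exists_walk_length_eq_dist
  obtain ⟨u1, hadj01, hd1v⟩ : ∃ u1, G.Adj u u1 ∧ G.dist u1 v ≤ G.dist u v - 1 := by
    cases p with
    | nil => simp [SimpleGraph.dist_self] at hd5
    | cons h q =>
      refine ⟨_, h, ?_⟩
      have hq := G.dist_le q
      simp only [Walk.length_cons] at hlen
      omega
  obtain ⟨p', hlen'⟩ := (hc v u).exists_walk_length_eq_dist
  obtain ⟨u4, hadj54, hd4u⟩ : ∃ u4, G.Adj v u4 ∧ G.dist u4 u ≤ G.dist u v - 1 := by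
    cases p' with
    | nil => simp [SimpleGraph.dist_self] at hd5
    | cons h q =>
      refine ⟨_, h, ?_⟩
      have hq := G.dist_le q
      have hcomm : G.dist v u = G.dist u v := dist_comm
      simp only [Walk.length_cons] at hlen'
      omega
  have d01 : G.dist u u1 ≤ 1 := adj_dist_le_one hadj01
  have d45 : G.dist u4 v ≤ 1 := adj_dist_le_one hadj54.symm
  have t1 : G.dist u v ≤ G.dist u u1 + G.dist u1 v := hc.dist_triangle
  have t2 : G.dist u v ≤ G.dist u u4 + G.dist u4 v := hc.dist_triangle
  have t3 : G.dist u1 v ≤ G.dist u1 u4 + G.dist u4 v := hc.dist_triangle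
  have D1v : 4 ≤ G.dist u1 v := by omega
  have Duu4 : 4 ≤ G.dist u u4 := by omega
  have D14 : 3 ≤ G.dist u1 u4 := by omega
  have hnuu1 : u ≠ u1 := hadj01.ne
  have hnu4v : u4 ≠ v := hadj54.ne'
  have hnuv : u ≠ v := ne_of_one_le_dist (G := G) (x := u) (y := v) (by omega)
  have hnuu4 : u ≠ u4 := ne_of_one_le_dist (G := G) (x := u) (y := u4) (by omega)
  have hnu1u4 : u1 ≠ u4 := ne_of_one_le_dist (G := G) (x := u1) (y := u4) (by omega)
  have hnu1v : u1 ≠ v := ne_of_one_le_dist (G := G) (x := u1) (y := v) (by omega)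
  have hside : ∀ z, (¬G.Adj z u ∧ ¬G.Adj z u1) ∨ (¬G.Adj z u4 ∧ ¬G.Adj z v) := by
    intro z
    by_cases h4 : G.Adj z u4 ∨ G.Adj z v
    · left
      constructor
      · intro hzu
        have e1 : G.dist u z ≤ 1 := adj_dist_le_one hzu.symm
        rcases h4 with h' | h'
        · have e2 : G.dist z u4 ≤ 1 := adj_dist_le_one h'
          have := hc.dist_triangle (u := u) (v := z) (w := u4)
          omega
        · have e2 : G.dist z v ≤ 1 := adj_dist_le_one h'
          have := hc.dist_triangle (u := u) (v := z) (w := v)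
          omega
      · intro hzu1
        have e1 : G.dist u1 z ≤ 1 := adj_dist_le_one hzu1.symm
        rcases h4 with h' | h'
        · have e2 : G.dist z u4 ≤ 1 := adj_dist_le_one h'
          have := hc.dist_triangle (u := u1) (v := z) (w := u4)
          omega
        · have e2 : G.dist z v ≤ 1 := adj_dist_le_one h'
          have := hc.dist_triangle (u := u1) (v := z) (w := v)
          omega
    · right
      push_neg at h4
      exact h4
  have hS4 : ({u, u1, u4, v} : Set V).ncard = 4 := by
    have h1 : u ∉ ({u1, u4, v} : Set V) := by simp [hnuu1, hnuu4, hnuv]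
    have h2 : u1 ∉ ({u4, v} : Set V) := by simp [hnu1u4, hnu1v]
    rw [Set.ncard_insert_of_notMem h1 (Set.toFinite _),
      Set.ncard_insert_of_notMem h2 (Set.toFinite _), Set.ncard_pair hnu4v]
  have hgeo : IsGeodetic Gᶜ ({u, u1, u4, v} : Set V) := by
    intro z
    by_cases hzS : z ∈ ({u, u1, u4, v} : Set V)
    · exact ⟨z, hzS, z, hzS, Walk.nil, Walk.IsPath.nil,
        by simp [SimpleGraph.dist_self], by simp⟩
    · simp only [Set.mem_insert_iff, Set.mem_singleton_iff, not_or] at hzS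
      obtain ⟨hz1, hz2, hz3, hz4⟩ := hzS
      rcases hside z with ⟨hn1, hn2⟩ | ⟨hn1, hn2⟩
      · obtain ⟨w, hw1, hw2, hw3⟩ := mid_geodesic hc hd5 hadj01 hn1 hn2 hz1 hz2
        exact ⟨u, by simp, u1, by simp, w, hw1, hw2, hw3⟩
      · obtain ⟨w, hw1, hw2, hw3⟩ := mid_geodesic hc hd5 hadj54.symm hn1 hn2 hz3 hz4
        exact ⟨u4, by simp, v, by simp, w, hw1, hw2, hw3⟩
  have hmem4 : (4 : ℕ) ∈ {n | ∃ S : Set V, IsGeodetic Gᶜ S ∧ S.ncard = n} :=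
    ⟨{u, u1, u4, v}, hgeo, hS4⟩
  have hub : geodeticNumber Gᶜ ≤ 4 := Nat.sInf_le hmem4
  have hlb : 4 ≤ geodeticNumber Gᶜ := by
    have hmem := Nat.sInf_mem (⟨4, hmem4⟩ :
      Set.Nonempty {n | ∃ S : Set V, IsGeodetic Gᶜ S ∧ S.ncard = n})
    obtain ⟨S', hS', hcard⟩ := hmem
    have hlow : 4 ≤ S'.ncard := lower_bound hT hd5 hdeg hS'
    rw [hcard] at hlow
    exact hlow
  omega
end

section
/- Let G be a graph whose complement is disconnected, with all components of the complement having at least 2 vertices and at least two such components (k ≥ 2). Then the geodetic number of G is at most 4. -/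
open SimpleGraph

/-- A component with at least 2 vertices contains an edge. -/
lemma exists_adj_pair {V : Type*} [Fintype V] (H : SimpleGraph V)
    (c : H.ConnectedComponent) (h : 2 ≤ c.supp.ncard) :
    ∃ a b, H.Adj a b ∧ H.connectedComponentMk a = c ∧ H.connectedComponentMk b = c := by
  obtain ⟨x, y, hx, hy, hxy⟩ := (Set.one_lt_ncard_iff (s := c.supp) (Set.toFinite _)).mp (by omega)
  rw [ConnectedComponent.mem_supp_iff] at hx hy
  have hr : H.Reachable x y := ConnectedComponent.exact (hx.trans hy.symm)
  obtain ⟨p⟩ := hr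
  cases p with
  | nil => exact absurd rfl hxy
  | cons hadj q =>
    refine ⟨x, _, hadj, hx, ?_⟩
    rw [← hx]
    exact ConnectedComponent.sound hadj.symm.reachable

/-- If the complement of `G` is disconnected with at least two components, all of
which have at least 2 vertices, then the geodetic number of `G` is at most 4. -/
theorem geodeticNumber_le_four {V : Type*} [Fintype V] (G : SimpleGraph V)
    (h1 : ¬ Gᶜ.Connected)
    (h2 : ∀ c : Gᶜ.ConnectedComponent, 2 ≤ c.supp.ncard)
    (h3 : ∃ c c' : Gᶜ.ConnectedComponent, c ≠ c') :
    geodeticNumber G ≤ 4 := by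
  obtain ⟨c, c', hcc'⟩ := h3
  obtain ⟨x₁, x₂, hx, hx₁, hx₂⟩ := exists_adj_pair Gᶜ c (h2 c)
  obtain ⟨y₁, y₂, hy, hy₁, hy₂⟩ := exists_adj_pair Gᶜ c' (h2 c')
  -- vertices in different complement components are adjacent in G
  have key : ∀ a b : V, Gᶜ.connectedComponentMk a ≠ Gᶜ.connectedComponentMk b → G.Adj a b := by
    intro a b hab
    by_contra hnadj
    have hne : a ≠ b := fun h => hab (by rw [h])
    have : Gᶜ.Adj a b := ⟨hne, hnadj⟩
    exact hab (ConnectedComponent.sound this.reachable)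
  -- all distances between the chosen pairs are 2
  have dist2 : ∀ a b w : V, Gᶜ.Adj a b → G.Adj a w → G.Adj w b → G.dist a b = 2 := by
    intro a b w hab haw hwb
    have hnadj : ¬ G.Adj a b := hab.2
    have hle : G.dist a b ≤ 2 := by
      have := SimpleGraph.dist_le (Walk.cons haw (Walk.cons hwb Walk.nil))
      simpa using this
    have h0 : G.dist a b ≠ 0 := by
      rw [SimpleGraph.dist_ne_zero_iff_ne_and_reachable]
      exact ⟨hab.1, ⟨Walk.cons haw (Walk.cons hwb Walk.nil)⟩⟩
    have h1' : G.dist a b ≠ 1 := fun h => hnadj (SimpleGraph.dist_eq_one_iff_adj.mp h)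
    omega
  have geo : ∀ (a b w : V), Gᶜ.Adj a b → G.Adj a w → G.Adj w b →
      ∃ p : G.Walk a b, p.IsPath ∧ p.length = G.dist a b ∧ w ∈ p.support := by
    intro a b w hab haw hwb
    refine ⟨Walk.cons haw (Walk.cons hwb Walk.nil), ?_, ?_, ?_⟩
    · simp [Walk.isPath_def, List.Nodup]
      refine ⟨⟨haw.ne, hab.1⟩, hwb.ne⟩
    · simp [dist2 a b w hab haw hwb]
    · simp
  set S : Set V := {x₁, x₂, y₁, y₂} with hS
  have hGeo : IsGeodetic G S := by
    intro z
    by_cases hz : Gᶜ.connectedComponentMk z = c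
    · -- use y₁, y₂ (in c'), z adjacent to both
      have h1' : G.Adj y₁ z := key y₁ z (by rw [hy₁, hz]; exact hcc'.symm)
      have h2' : G.Adj z y₂ := key z y₂ (by rw [hy₂, hz]; exact hcc')
      obtain ⟨p, hp⟩ := geo y₁ y₂ z hy h1' h2'
      exact ⟨y₁, by simp [hS], y₂, by simp [hS], p, hp⟩
    · have h1' : G.Adj x₁ z := key x₁ z (by rw [hx₁]; exact fun h => hz h.symm)
      have h2' : G.Adj z x₂ := key z x₂ (by rw [hx₂]; exact hz)
      obtain ⟨p, hp⟩ := geo x₁ x₂ z hx h1' h2'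
      exact ⟨x₁, by simp [hS], x₂, by simp [hS], p, hp⟩
  calc geodeticNumber G ≤ S.ncard := Nat.sInf_le ⟨S, hGeo, rfl⟩
    _ ≤ 4 := by
        rw [hS]
        refine le_trans (Set.ncard_insert_le _ _) ?_
        refine Nat.succ_le_succ ?_
        refine le_trans (Set.ncard_insert_le _ _) ?_
        refine Nat.succ_le_succ ?_
        refine le_trans (Set.ncard_insert_le _ _) ?_
        refine Nat.succ_le_succ ?_
        simp [Set.ncard_singleton]
end

section
/- Let G be a graph which is the join of graphs G_1 and G_2, where both G_1 and G_2 contain a pair of nonadjacent vertices. If D_1 is a nonadjacent pair in G_1 and D_2 a nonadjacent pair in G_2, then D_1 ∪ D_2 is a geodetic set of G. -/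
open SimpleGraph

/-- The join `G₁ ⊗ G₂` of two graphs: their disjoint union together with all
edges between the two vertex sets. -/
def joinGraph {V₁ V₂ : Type*} (G₁ : SimpleGraph V₁) (G₂ : SimpleGraph V₂) :
    SimpleGraph (V₁ ⊕ V₂) where
  Adj x y :=
    match x, y with
    | Sum.inl a, Sum.inl b => G₁.Adj a b
    | Sum.inr a, Sum.inr b => G₂.Adj a b
    | Sum.inl _, Sum.inr _ => True
    | Sum.inr _, Sum.inl _ => True
  symm := by
    constructor
    rintro (a | a) (b | b) h <;> simp_all only <;> exact h.symm
  loopless := by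
    constructor
    rintro (a | a) h
    · exact G₁.loopless.irrefl a h
    · exact G₂.loopless.irrefl a h

lemma dist_two_aux {V : Type*} {G : SimpleGraph V} {a b z : V} (hab : a ≠ b)
    (hnadj : ¬ G.Adj a b) (h1 : G.Adj a z) (h2 : G.Adj z b) :
    G.dist a b = 2 := by
  have hle : G.dist a b ≤ 2 := by
    have := SimpleGraph.dist_le (Walk.cons h1 (Walk.cons h2 Walk.nil))
    simpa using this
  have h0 : G.dist a b ≠ 0 := by
    intro h
    exact hab (Reachable.dist_eq_zero_iff ⟨Walk.cons h1 (Walk.cons h2 Walk.nil)⟩ |>.mp h)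
  have h1' : G.dist a b ≠ 1 := fun h => hnadj (SimpleGraph.dist_eq_one_iff_adj.mp h)
  omega

/-- In a join of two graphs each containing a nonadjacent pair, the union of a
nonadjacent pair from each side is a geodetic set. -/
theorem join_nonadjacent_pairs_geodetic {V₁ V₂ : Type*}
    (G₁ : SimpleGraph V₁) (G₂ : SimpleGraph V₂)
    (x₁ y₁ : V₁) (hne₁ : x₁ ≠ y₁) (h₁ : ¬ G₁.Adj x₁ y₁)
    (x₂ y₂ : V₂) (hne₂ : x₂ ≠ y₂) (h₂ : ¬ G₂.Adj x₂ y₂) :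
    IsGeodetic (joinGraph G₁ G₂)
      {Sum.inl x₁, Sum.inl y₁, Sum.inr x₂, Sum.inr y₂} := by
  set G := joinGraph G₁ G₂ with hG
  rintro (a | b)
  · refine ⟨Sum.inr x₂, by simp, Sum.inr y₂, by simp, ?_⟩
    have ha1 : G.Adj (Sum.inr x₂) (Sum.inl a) := trivial
    have ha2 : G.Adj (Sum.inl a) (Sum.inr y₂) := trivial
    have hab : (Sum.inr x₂ : V₁ ⊕ V₂) ≠ Sum.inr y₂ := by simpa using hne₂
    have hnadj : ¬ G.Adj (Sum.inr x₂) (Sum.inr y₂) := h₂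
    refine ⟨Walk.cons ha1 (Walk.cons ha2 Walk.nil), ?_, ?_, by simp⟩
    · simp [Walk.isPath_def, hab, hne₂]
    · rw [dist_two_aux hab hnadj ha1 ha2]; simp
  · refine ⟨Sum.inl x₁, by simp, Sum.inl y₁, by simp, ?_⟩
    have ha1 : G.Adj (Sum.inl x₁) (Sum.inr b) := trivial
    have ha2 : G.Adj (Sum.inr b) (Sum.inl y₁) := trivial
    have hab : (Sum.inl x₁ : V₁ ⊕ V₂) ≠ Sum.inl y₁ := by simpa using hne₁
    have hnadj : ¬ G.Adj (Sum.inl x₁) (Sum.inl y₁) := h₁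
    refine ⟨Walk.cons ha1 (Walk.cons ha2 Walk.nil), ?_, ?_, by simp⟩
    · simp [Walk.isPath_def, hab, hne₁]
    · rw [dist_two_aux hab hnadj ha1 ha2]; simp
end

section
/- Let G be a connected AT-free graph, let z be a vertex, and let x, y be nonadjacent vertices such that z lies in C_x(y) ∩ C_y(x), where C_x(y) denotes the component of G − N[x] containing y. Then x and y lie in different components of G − N[z]. -/
open SimpleGraph

/-- There is a path from `a` to `b` in `G` all of whose vertices avoid the
closed neighborhood of `c`. -/
def ConnAvoiding {V : Type*} (G : SimpleGraph V) (c a b : V) : Prop :=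
  ∃ p : G.Walk a b, ∀ v ∈ p.support, v ≠ c ∧ ¬ G.Adj c v

/-- `{x, y, z}` is an asteroidal triple: three pairwise nonadjacent vertices such
that any two of them are joined by a path avoiding the closed neighborhood of
the third. -/
def IsAsteroidalTriple {V : Type*} (G : SimpleGraph V) (x y z : V) : Prop :=
  x ≠ y ∧ y ≠ z ∧ x ≠ z ∧ ¬ G.Adj x y ∧ ¬ G.Adj y z ∧ ¬ G.Adj x z ∧
    ConnAvoiding G z x y ∧ ConnAvoiding G x y z ∧ ConnAvoiding G y x z

/-- A graph is AT-free if it contains no asteroidal triple. -/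
def IsATFree {V : Type*} (G : SimpleGraph V) : Prop :=
  ∀ x y z : V, ¬ IsAsteroidalTriple G x y z

/-- There is a walk from `u` to `v` in `G` all of whose vertices avoid the set `A`. -/
def ReachAvoiding {V : Type*} (G : SimpleGraph V) (A : Set V) (u v : V) : Prop :=
  ∃ p : G.Walk u v, ∀ w ∈ p.support, w ∉ A

/-- The closed neighborhood of `x`. -/
def closedNbhd {V : Type*} (G : SimpleGraph V) (x : V) : Set V :=
  insert x (G.neighborSet x)

/-- In a connected AT-free graph, if `z` is between nonadjacent vertices `x` and
`y` (i.e. `z ∈ C_x(y) ∩ C_y(x)`, where `C_x(y)` is the component of `G − N[x]`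
containing `y`), then `x` and `y` lie in different components of `G − N[z]`. -/
theorem between_separates {V : Type*} (G : SimpleGraph V)
    (hconn : G.Connected) (hAT : IsATFree G)
    (x y z : V) (hne : x ≠ y) (hxy : ¬ G.Adj x y)
    (hzy : ReachAvoiding G (closedNbhd G x) y z)
    (hzx : ReachAvoiding G (closedNbhd G y) x z) :
    x ∉ closedNbhd G z ∧ y ∉ closedNbhd G z ∧
      ¬ ReachAvoiding G (closedNbhd G z) x y := by
  have key : ∀ c a b : V, ReachAvoiding G (closedNbhd G c) a b → ConnAvoiding G c a b := by
    rintro c a b ⟨p, hp⟩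
    refine ⟨p, fun v hv => ?_⟩
    have h := hp v hv
    simp only [closedNbhd, Set.mem_insert_iff, SimpleGraph.mem_neighborSet, not_or] at h
    exact h
  have hzx' : z ∉ closedNbhd G x := by
    obtain ⟨p, hp⟩ := hzy
    exact hp z p.end_mem_support
  have hzy' : z ∉ closedNbhd G y := by
    obtain ⟨p, hp⟩ := hzx
    exact hp z p.end_mem_support
  simp only [closedNbhd, Set.mem_insert_iff, SimpleGraph.mem_neighborSet, not_or] at hzx' hzy'
  refine ⟨?_, ?_, ?_⟩
  · simp only [closedNbhd, Set.mem_insert_iff, SimpleGraph.mem_neighborSet, not_or]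
    exact ⟨fun h => hzx'.1 h.symm, fun h => hzx'.2 h.symm⟩
  · simp only [closedNbhd, Set.mem_insert_iff, SimpleGraph.mem_neighborSet, not_or]
    exact ⟨fun h => hzy'.1 h.symm, fun h => hzy'.2 h.symm⟩
  · intro h
    exact hAT x y z ⟨hne, fun e => hzy'.1 e.symm, fun e => hzx'.1 e.symm, hxy,
      hzy'.2, hzx'.2, key z x y h, key x y z hzy, key y x z hzx⟩
end

section
/- Let G be a thin spider with head R ≠ ∅, body K, and feet S. Then every minimum geodetic set of G consists of S together with a minimum 2-geodetic set of G[R], i.e., g(G) = |S| + g_2(G[R]). -/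
open SimpleGraph

/-- A geodetic set `D` is 2-geodetic if every vertex outside `D` has two
nonadjacent neighbors in `D`. -/
def Is2Geodetic {V : Type*} (G : SimpleGraph V) (D : Set V) : Prop :=
  IsGeodetic G D ∧ ∀ x : V, x ∉ D →
    ∃ a ∈ D, ∃ b ∈ D, a ≠ b ∧ G.Adj x a ∧ G.Adj x b ∧ ¬ G.Adj a b

/-- The 2-geodetic number of `G`: minimum cardinality of a 2-geodetic set. -/
noncomputable def geodetic2Number {V : Type*} (G : SimpleGraph V) : ℕ :=
  sInf {n | ∃ D : Set V, Is2Geodetic G D ∧ D.ncard = n}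


private lemma le_dist_of_forall {V : Type*} {G : SimpleGraph V} {a b : V} {n : ℕ}
    (p : G.Walk a b) (h : ∀ q : G.Walk a b, n ≤ q.length) : n ≤ G.dist a b := by
  obtain ⟨q, hq⟩ := Reachable.exists_walk_length_eq_dist ⟨p⟩
  exact hq ▸ h q

private lemma dist_eq_two_of {V : Type*} {G : SimpleGraph V} {a b : V}
    (hne : a ≠ b) (hnadj : ¬ G.Adj a b) (p : G.Walk a b) (hp : p.length = 2) :
    G.dist a b = 2 := by
  refine le_antisymm (hp ▸ G.dist_le p) (le_dist_of_forall p ?_)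
  intro q
  cases q with
  | nil => exact absurd rfl hne
  | cons h1 q1 =>
    cases q1 with
    | nil => exact absurd h1 hnadj
    | cons h2 q2 => simp only [Walk.length_cons]; omega

private lemma exists_cons_of_ne {V : Type*} {G : SimpleGraph V} {a b : V}
    (p : G.Walk a b) (h : a ≠ b) :
    ∃ (c : V) (hadj : G.Adj a c) (p' : G.Walk c b),
      p = Walk.cons hadj p' ∧ p.length = p'.length + 1 := by
  cases p with
  | nil => exact absurd rfl h
  | cons hadj p' => exact ⟨_, hadj, p', rfl, by simp⟩

private lemma interior_aux {V : Type*} [DecidableEq V] {G : SimpleGraph V} {x y z : V} (p : G.Walk x y)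
    (hlen : p.length = G.dist x y) (hz : z ∈ p.support) (hzx : z ≠ x) (hzy : z ≠ y) :
    ∃ u v, G.Adj z u ∧ G.Adj z v ∧ u ≠ v ∧ ¬ G.Adj u v ∧
      ∃ (q1 : G.Walk x u) (q2 : G.Walk v y), q1.length + q2.length + 2 = G.dist x y := by
  have hsum : (p.takeUntil z hz).length + (p.dropUntil z hz).length = G.dist x y := by
    rw [← hlen]
    conv_rhs => rw [← Walk.take_spec p hz]
    rw [Walk.length_append]
  obtain ⟨u, hzu, q', hq', hql⟩ := exists_cons_of_ne (p.takeUntil z hz).reverse hzx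
  obtain ⟨v, hzv, w', hw', hwl⟩ := exists_cons_of_ne (p.dropUntil z hz) hzy
  rw [Walk.length_reverse] at hql
  have hdist : q'.length + w'.length + 2 = G.dist x y := by omega
  have hneq : u ≠ v := by
    rintro rfl
    have := G.dist_le (q'.reverse.append w')
    simp [Walk.length_append, Walk.length_reverse] at this
    omega
  have hnadj : ¬ G.Adj u v := by
    intro hadj
    have := G.dist_le (q'.reverse.append (Walk.cons hadj w'))
    simp [Walk.length_append, Walk.length_reverse, Walk.length_cons] at this
    omega
  exact ⟨u, v, hzu, hzv, hneq, hnadj, q'.reverse, w',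
    by rw [Walk.length_reverse]; omega⟩

private lemma isGeodetic_univ' {V : Type*} (G : SimpleGraph V) : IsGeodetic G Set.univ := by
  intro z
  exact ⟨z, trivial, z, trivial, Walk.nil, Walk.IsPath.nil, by simp [SimpleGraph.dist_self], by simp⟩

private lemma isPath_two {V : Type*} {G : SimpleGraph V} {a z b : V}
    (h1 : G.Adj a z) (h2 : G.Adj z b) (hab : a ≠ b) :
    (Walk.cons h1 (Walk.cons h2 Walk.nil)).IsPath := by
  simp [Walk.isPath_def]
  exact ⟨⟨h1.ne, hab⟩, h2.ne⟩

private lemma isPath_three {V : Type*} {G : SimpleGraph V} {a b c d : V}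
    (h1 : G.Adj a b) (h2 : G.Adj b c) (h3 : G.Adj c d)
    (hac : a ≠ c) (had : a ≠ d) (hbd : b ≠ d) :
    (Walk.cons h1 (Walk.cons h2 (Walk.cons h3 Walk.nil))).IsPath := by
  simp [Walk.isPath_def]
  exact ⟨⟨h1.ne, hac, had⟩, ⟨h2.ne, hbd⟩, h3.ne⟩

/-- For a thin spider `G` with feet `S`, body `K` and nonempty head `R`,
`g(G) = |S| + g₂(G[R])`. -/
theorem geodeticNumber_thinSpider {V : Type*} [Fintype V] (G : SimpleGraph V)
    (S K R : Set V)
    (hSK : Disjoint S K) (hSR : Disjoint S R) (hKR : Disjoint K R)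
    (hcover : S ∪ K ∪ R = Set.univ)
    (hSindep : ∀ a ∈ S, ∀ b ∈ S, a ≠ b → ¬ G.Adj a b)
    (hKclique : G.IsClique K)
    (hcard : S.ncard = K.ncard) (hK2 : 2 ≤ K.ncard)
    (hRK : ∀ r ∈ R, ∀ k ∈ K, G.Adj r k)
    (hRS : ∀ r ∈ R, ∀ a ∈ S, ¬ G.Adj r a)
    (hmatch : ∃ f : V → V, Set.BijOn f S K ∧
      ∀ a ∈ S, ∀ k ∈ K, (G.Adj a k ↔ k = f a))
    (hR : R.Nonempty) :
    geodeticNumber G = S.ncard + geodetic2Number (G.induce R) := by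
  classical
  obtain ⟨f, hfbij, hfmatch⟩ := hmatch
  have hmem : ∀ x : V, x ∈ S ∨ x ∈ K ∨ x ∈ R := by
    intro x
    have hx : x ∈ S ∪ K ∪ R := hcover ▸ Set.mem_univ x
    simpa [Set.mem_union, or_assoc] using hx
  have hfS : ∀ a ∈ S, f a ∈ K := fun a ha => hfbij.mapsTo ha
  have hadjf : ∀ a ∈ S, G.Adj a (f a) := fun a ha => (hfmatch a ha (f a) (hfS a ha)).mpr rfl
  have hnbrS : ∀ a ∈ S, ∀ u, G.Adj a u → u = f a := by
    intro a ha u hadj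
    rcases hmem u with hu | hu | hu
    · exact absurd hadj (hSindep a ha u hu (G.ne_of_adj hadj))
    · exact (hfmatch a ha u hu).mp hadj
    · exact absurd hadj.symm (hRS u hu a ha)
  have hKne : K.Nonempty := by
    rcases K.eq_empty_or_nonempty with h | h
    · rw [h] at hK2; simp at hK2
    · exact h
  have hS2 : 2 ≤ S.ncard := hcard ▸ hK2
  -- distance facts
  have hdistSS : ∀ a ∈ S, ∀ b ∈ S, a ≠ b → G.dist a b = 3 := by
    intro a ha b hb hne
    have hfne : f a ≠ f b := fun h => hne (hfbij.injOn ha hb h)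
    let hwalk : G.Walk a b :=
      .cons (hadjf a ha) (.cons (hKclique (hfS a ha) (hfS b hb) hfne) (.cons (hadjf b hb).symm .nil))
    have hwl : hwalk.length = 3 := rfl
    refine le_antisymm (hwl ▸ G.dist_le hwalk) (le_dist_of_forall hwalk ?_)
    intro t
    cases t with
    | nil => exact absurd rfl hne
    | cons h1 t1 =>
      cases t1 with
      | nil => exact absurd h1 (hSindep a ha b hb hne)
      | cons h2 t2 =>
        cases t2 with
        | nil =>
          have hm1 := hnbrS a ha _ h1
          have hm2 := hnbrS b hb _ h2.symm
          exact absurd (hfbij.injOn ha hb (by rw [← hm1, hm2])) hne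
        | cons h3 t3 => simp only [Walk.length_cons]; omega
  have hdle2 : ∀ x y : V, x ∉ S ∨ y ∉ S → G.dist x y ≤ 2 := by
    have key : ∀ x y : V, y ∉ S → G.dist x y ≤ 2 := by
      intro x y hyS
      by_cases hxy : x = y
      · subst hxy; simp [SimpleGraph.dist_self]
      rcases hmem y with hy | hy | hy
      · exact absurd hy hyS
      · -- y ∈ K
        rcases hmem x with hx | hx | hx
        · by_cases hyfx : y = f x
          · subst hyfx
            have := G.dist_le (Walk.cons (hadjf x hx) Walk.nil)
            simpa using this.trans (by norm_num)
          · have := G.dist_le (Walk.cons (hadjf x hx)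
              (Walk.cons (hKclique (hfS x hx) hy (fun h => hyfx h.symm)) Walk.nil))
            simpa using this
        · have := G.dist_le (Walk.cons (hKclique hx hy hxy) Walk.nil)
          simpa using this.trans (by norm_num)
        · have := G.dist_le (Walk.cons (hRK x hx y hy) Walk.nil)
          simpa using this.trans (by norm_num)
      · -- y ∈ R
        rcases hmem x with hx | hx | hx
        · have := G.dist_le (Walk.cons (hadjf x hx)
            (Walk.cons (hRK y hy (f x) (hfS x hx)).symm Walk.nil))
          simpa using this
        · have := G.dist_le (Walk.cons (hRK y hy x hx).symm Walk.nil)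
          simpa using this.trans (by norm_num)
        · obtain ⟨k, hk⟩ := hKne
          have := G.dist_le (Walk.cons (hRK x hx k hk)
            (Walk.cons (hRK y hy k hk).symm Walk.nil))
          simpa using this
    intro x y h
    rcases h with h | h
    · rw [SimpleGraph.dist_comm]; exact key y x h
    · exact key x y h
  have hdle3 : ∀ x y : V, G.dist x y ≤ 3 := by
    intro x y
    by_cases hxy : x = y
    · subst hxy; simp [SimpleGraph.dist_self]
    by_cases hx : x ∈ S
    · by_cases hy : y ∈ S
      · exact (hdistSS x hx y hy hxy).le
      · exact (hdle2 x y (Or.inr hy)).trans (by norm_num)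
    · exact (hdle2 x y (Or.inl hx)).trans (by norm_num)
  have hdist3S : ∀ x y : V, G.dist x y = 3 → x ∈ S ∧ y ∈ S := by
    intro x y h3
    constructor
    · by_contra hx
      have := hdle2 x y (Or.inl hx); omega
    · by_contra hy
      have := hdle2 x y (Or.inr hy); omega
  have hdistRR : ∀ a ∈ R, ∀ b ∈ R, a ≠ b → ¬ G.Adj a b → G.dist a b = 2 := by
    intro a ha b hb hne hnadj
    obtain ⟨k, hk⟩ := hKne
    exact dist_eq_two_of hne hnadj
      (Walk.cons (hRK a ha k hk) (Walk.cons (hRK b hb k hk).symm Walk.nil)) rfl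
  -- every geodetic set contains S
  have hSmand : ∀ T : Set V, IsGeodetic G T → S ⊆ T := by
    intro T hT a ha
    obtain ⟨x, hx, y, hy, p, hp, hplen, hsup⟩ := hT a
    by_cases hax : a = x
    · subst hax; exact hx
    by_cases hay : a = y
    · subst hay; exact hy
    obtain ⟨u, v, hau, hav, huv, -, -⟩ := interior_aux p hplen hsup hax hay
    have h1 := hnbrS a ha u hau
    have h2 := hnbrS a ha v hav
    exact absurd (h1.trans h2.symm) huv
  -- covering of R-vertices outside a geodetic set
  have hcov2 : ∀ T : Set V, IsGeodetic G T → ∀ r ∈ R, r ∉ T →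
      ∃ a, (a ∈ T ∧ a ∈ R) ∧ ∃ b, (b ∈ T ∧ b ∈ R) ∧
        a ≠ b ∧ G.Adj r a ∧ G.Adj r b ∧ ¬ G.Adj a b := by
    intro T hT r hr hrT
    obtain ⟨x, hx, y, hy, p, hp, hplen, hsup⟩ := hT r
    have hrx : r ≠ x := fun h => hrT (h ▸ hx)
    have hry : r ≠ y := fun h => hrT (h ▸ hy)
    obtain ⟨u, v, hru, hrv, huv, hnadjuv, q1, q2, hq⟩ := interior_aux p hplen hsup hrx hry
    have huR : u ∈ R := by
      rcases hmem u with h | h | h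
      · exact absurd hru (hRS r hr u h)
      · rcases hmem v with h' | h' | h'
        · exact absurd hrv (hRS r hr v h')
        · exact absurd (hKclique h h' huv) hnadjuv
        · exact absurd (hRK v h' u h).symm hnadjuv
      · exact h
    have hvR : v ∈ R := by
      rcases hmem v with h | h | h
      · exact absurd hrv (hRS r hr v h)
      · exact absurd (hRK u huR v h) hnadjuv
      · exact h
    have hd3 := hdle3 x y
    have hsum1 : q1.length + q2.length ≤ 1 := by omega
    by_cases hq1 : q1.length = 0
    · have hxu : x = u := Walk.eq_of_length_eq_zero hq1
      by_cases hq2 : q2.length = 0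
      · have hvy : v = y := Walk.eq_of_length_eq_zero hq2
        exact ⟨u, ⟨hxu ▸ hx, huR⟩, v, ⟨hvy.symm ▸ hy, hvR⟩, huv, hru, hrv, hnadjuv⟩
      · -- dist = 3, so x ∈ S, but x = u ∈ R
        have hdist3 : G.dist x y = 3 := by omega
        obtain ⟨hxS, -⟩ := hdist3S x y hdist3
        exact absurd (hxu ▸ huR) (Set.disjoint_left.mp hSR hxS)
    · have hq2 : q2.length = 0 := by omega
      have hvy : v = y := Walk.eq_of_length_eq_zero hq2
      have hdist3 : G.dist x y = 3 := by omega
      obtain ⟨-, hyS⟩ := hdist3S x y hdist3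
      exact absurd (hvy ▸ hvR) (Set.disjoint_left.mp hSR hyS)
  -- nonemptiness of the optimization sets
  have hgeoNe : {n | ∃ S' : Set V, IsGeodetic G S' ∧ S'.ncard = n}.Nonempty :=
    ⟨_, Set.univ, isGeodetic_univ' G, rfl⟩
  have hgeo2Ne : {n | ∃ D : Set ↥R, Is2Geodetic (G.induce R) D ∧ D.ncard = n}.Nonempty :=
    ⟨_, Set.univ, ⟨isGeodetic_univ' _, fun x hx => absurd (Set.mem_univ x) hx⟩, rfl⟩
  obtain ⟨T, hTgeo, hTcard⟩ := Nat.sInf_mem hgeoNe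
  obtain ⟨D, hD, hDcard⟩ := Nat.sInf_mem hgeo2Ne
  refine le_antisymm ?_ ?_
  · -- upper bound: S ∪ val '' D is geodetic
    have hTgeo' : IsGeodetic G (S ∪ Subtype.val '' D) := by
      intro z
      rcases hmem z with hz | hz | hz
      · exact ⟨z, Or.inl hz, z, Or.inl hz, Walk.nil, Walk.IsPath.nil,
          by simp [SimpleGraph.dist_self], by simp⟩
      · -- z ∈ K : z = f s, lies on geodesic between s and s'
        obtain ⟨s, hs, hfs⟩ := hfbij.surjOn hz
        obtain ⟨s', hs', hss'⟩ := Set.exists_ne_of_one_lt_ncard (show 1 < S.ncard by omega) s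
        have hfne : f s ≠ f s' := fun h => hss' (hfbij.injOn hs' hs h.symm)
        have hne1 : s ≠ f s' := fun h => Set.disjoint_left.mp hSK hs (h ▸ hfS s' hs')
        have hne2 : s ≠ s' := fun h => hss' h.symm
        have hne3 : f s ≠ s' := fun h => Set.disjoint_left.mp hSK hs' (h ▸ hfS s hs)
        refine ⟨s, Or.inl hs, s', Or.inl hs',
          Walk.cons (hadjf s hs) (Walk.cons (hKclique (hfS s hs) (hfS s' hs') hfne)
            (Walk.cons (hadjf s' hs').symm Walk.nil)),
          isPath_three _ _ _ hne1 hne2 hne3, ?_, ?_⟩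
        · rw [hdistSS s hs s' hs' hne2]; rfl
        · simp [hfs]
      · -- z ∈ R
        by_cases hzD : (⟨z, hz⟩ : ↥R) ∈ D
        · refine ⟨z, Or.inr ⟨⟨z, hz⟩, hzD, rfl⟩, z, Or.inr ⟨⟨z, hz⟩, hzD, rfl⟩,
            Walk.nil, Walk.IsPath.nil, by simp [SimpleGraph.dist_self], by simp⟩
        · obtain ⟨a, haD, b, hbD, hab, hza, hzb, hnab⟩ := hD.2 ⟨z, hz⟩ hzD
          have hza' : G.Adj z ↑a := hza
          have hzb' : G.Adj z ↑b := hzb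
          have hnab' : ¬ G.Adj ↑a ↑b := hnab
          have hab' : (a : V) ≠ (b : V) := fun h => hab (Subtype.ext h)
          refine ⟨↑a, Or.inr ⟨a, haD, rfl⟩, ↑b, Or.inr ⟨b, hbD, rfl⟩,
            Walk.cons hza'.symm (Walk.cons hzb' Walk.nil),
            isPath_two _ _ hab', ?_, by simp⟩
          rw [hdistRR ↑a a.2 ↑b b.2 hab' hnab']; rfl
    have hdisj : Disjoint S (Subtype.val '' D) := by
      refine Set.disjoint_left.mpr fun a ha hmem' => ?_
      obtain ⟨d, -, rfl⟩ := hmem'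
      exact Set.disjoint_left.mp hSR ha d.2
    have hcard' : (S ∪ Subtype.val '' D).ncard = S.ncard + D.ncard := by
      rw [Set.ncard_union_eq hdisj (Set.toFinite _) (Set.toFinite _),
        Set.ncard_image_of_injective _ Subtype.val_injective]
    calc geodeticNumber G ≤ (S ∪ Subtype.val '' D).ncard :=
          Nat.sInf_le ⟨S ∪ Subtype.val '' D, hTgeo', rfl⟩
      _ = S.ncard + D.ncard := hcard'
      _ = S.ncard + geodetic2Number (G.induce R) := by rw [hDcard]; rfl
  · -- lower bound
    set D0 : Set ↥R := Subtype.val ⁻¹' T with hD0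
    have hD0is2 : Is2Geodetic (G.induce R) D0 := by
      constructor
      · intro z
        by_cases hz : z ∈ D0
        · exact ⟨z, hz, z, hz, Walk.nil, Walk.IsPath.nil,
            by simp [SimpleGraph.dist_self], by simp⟩
        · obtain ⟨a, ⟨haT, haR⟩, b, ⟨hbT, hbR⟩, hab, hza, hzb, hnab⟩ :=
            hcov2 T hTgeo ↑z z.2 hz
          have hza2 : (G.induce R).Adj ⟨a, haR⟩ z := hza.symm
          have hzb2 : (G.induce R).Adj z ⟨b, hbR⟩ := hzb
          have hnab2 : ¬ (G.induce R).Adj ⟨a, haR⟩ ⟨b, hbR⟩ := hnab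
          have habne : (⟨a, haR⟩ : ↥R) ≠ ⟨b, hbR⟩ :=
            fun h => hab (congrArg Subtype.val h)
          refine ⟨⟨a, haR⟩, haT, ⟨b, hbR⟩, hbT,
            Walk.cons hza2 (Walk.cons hzb2 Walk.nil),
            isPath_two _ _ habne, ?_, by simp⟩
          rw [dist_eq_two_of habne hnab2 (Walk.cons hza2 (Walk.cons hzb2 Walk.nil)) rfl]
          rfl
      · intro x hx
        obtain ⟨a, ⟨haT, haR⟩, b, ⟨hbT, hbR⟩, hab, hxa, hxb, hnab⟩ :=
          hcov2 T hTgeo ↑x x.2 hx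
        exact ⟨⟨a, haR⟩, haT, ⟨b, hbR⟩, hbT, fun h => hab (congrArg Subtype.val h),
          hxa, hxb, hnab⟩
    have himg : Subtype.val '' D0 = T ∩ R := by
      ext w
      constructor
      · rintro ⟨d, hd, rfl⟩; exact ⟨hd, d.2⟩
      · rintro ⟨hwT, hwR⟩; exact ⟨⟨w, hwR⟩, hwT, rfl⟩
    have hcard1 : S.ncard + D0.ncard ≤ T.ncard := by
      have h1 : (S ∪ (T ∩ R)).ncard ≤ T.ncard :=
        Set.ncard_le_ncard
          (Set.union_subset (hSmand T hTgeo) Set.inter_subset_left) T.toFinite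
      have h2 : (S ∪ (T ∩ R)).ncard = S.ncard + (T ∩ R).ncard :=
        Set.ncard_union_eq (hSR.mono_right Set.inter_subset_right)
          (Set.toFinite _) (Set.toFinite _)
      have h3 : (T ∩ R).ncard = D0.ncard := by
        rw [← himg, Set.ncard_image_of_injective _ Subtype.val_injective]
      omega
    have hg2le : geodetic2Number (G.induce R) ≤ D0.ncard :=
      Nat.sInf_le ⟨D0, hD0is2, rfl⟩
    calc S.ncard + geodetic2Number (G.induce R) ≤ S.ncard + D0.ncard := by omega
      _ ≤ T.ncard := hcard1
      _ = geodeticNumber G := hTcard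
end

section
/- Let G be a permutation graph with permutation diagram, let S be a minimal separator of G realized by a scanline, and let C be a connected component of G − S. Then the neighborhoods in C of any two nonadjacent vertices of S are ordered by inclusion: for nonadjacent u, v ∈ S, either N(u) ∩ C ⊆ N(v) ∩ C or N(v) ∩ C ⊆ N(u) ∩ C. -/
open SimpleGraph

/-- `S` separates `a` from `b` in `G`: `a, b ∉ S` and no walk from `a` to `b`
avoids `S`. -/
def SeparatesAvoiding {V : Type*} (G : SimpleGraph V) (S : Set V) (a b : V) : Prop :=
  a ∉ S ∧ b ∉ S ∧ ¬ ReachAvoiding G S a b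

/-- `S` is a minimal separator of `G`: it separates some pair `a, b` and no
proper subset of `S` does. -/
def IsMinimalSeparator {V : Type*} (G : SimpleGraph V) (S : Set V) : Prop :=
  ∃ a b : V, SeparatesAvoiding G S a b ∧ ∀ S' ⊂ S, ¬ SeparatesAvoiding G S' a b

/-- `C` is a connected component of `G − S`. -/
def IsCompAvoiding {V : Type*} (G : SimpleGraph V) (S C : Set V) : Prop :=
  C.Nonempty ∧ Disjoint C S ∧ (∀ u ∈ C, ∀ v ∈ C, ReachAvoiding G S u v) ∧
    ∀ u ∈ C, ∀ v : V, v ∉ S → ReachAvoiding G S u v → v ∈ C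

/-- In a permutation graph with diagram given by endpoint maps `top`, `bot`, let
`S` be a minimal separator realized by a scanline `(st, sb)` and let `C` be a
component of `G − S`.  Then the neighborhoods in `C` of any two nonadjacent
vertices of `S` are ordered by inclusion. -/
theorem permutation_separator_neighborhoods_nested {V : Type*}
    (G : SimpleGraph V) (top bot : V → ℝ)
    (htop : Function.Injective top) (hbot : Function.Injective bot)
    (hrep : ∀ x y : V, G.Adj x y ↔
      (top x < top y ∧ bot y < bot x) ∨ (top y < top x ∧ bot x < bot y))
    (S : Set V) (hmin : IsMinimalSeparator G S)
    (st sb : ℝ) (hst : ∀ v : V, top v ≠ st) (hsb : ∀ v : V, bot v ≠ sb)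
    (hscan : S = {v : V | (top v < st ∧ sb < bot v) ∨ (st < top v ∧ bot v < sb)})
    (C : Set V) (hC : IsCompAvoiding G S C) :
    ∀ u ∈ S, ∀ v ∈ S, ¬ G.Adj u v →
      (G.neighborSet u ∩ C ⊆ G.neighborSet v ∩ C ∨
       G.neighborSet v ∩ C ⊆ G.neighborSet u ∩ C) := by
  obtain ⟨hCne, hdisj, hconn, _⟩ := hC
  -- every vertex not in S lies strictly on one side of the scanline
  have hside : ∀ w : V, w ∉ S →
      (top w < st ∧ bot w < sb) ∨ (st < top w ∧ sb < bot w) := by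
    intro w hw
    simp only [hscan, Set.mem_setOf_eq, not_or, not_and, not_lt] at hw
    rcases lt_or_gt_of_ne (hst w) with h | h
    · exact Or.inl ⟨h, lt_of_le_of_ne (hw.1 h) (hsb w)⟩
    · exact Or.inr ⟨h, lt_of_le_of_ne (hw.2 h) (Ne.symm (hsb w))⟩
  -- no edge crosses the scanline between two non-separator vertices
  have hnocross : ∀ a b : V, top a < st → bot a < sb → st < top b → sb < bot b →
      ¬ G.Adj a b := by
    intro a b h1 h2 h3 h4 hadj
    rw [hrep] at hadj
    rcases hadj with ⟨ha, hb⟩ | ⟨ha, hb⟩ <;> linarith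
  -- a walk avoiding S stays on one side
  have hwalk : ∀ a b : V, ∀ p : G.Walk a b, (∀ w ∈ p.support, w ∉ S) →
      top a < st → bot a < sb → top b < st ∧ bot b < sb := by
    intro a b p
    induction p with
    | nil => exact fun _ h1 h2 => ⟨h1, h2⟩
    | @cons x y z h q ih =>
      intro hsup h1 h2
      have hy : y ∉ S := hsup y (by
        rw [Walk.support_cons]
        exact List.mem_cons_of_mem x q.start_mem_support)
      rcases hside y hy with ⟨hy1, hy2⟩ | ⟨hy1, hy2⟩
      · exact ih (fun w hw => hsup w (by
          rw [Walk.support_cons]; exact List.mem_cons_of_mem x hw)) hy1 hy2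
      · exact absurd h (hnocross x y h1 h2 hy1 hy2)
  -- the component C lies entirely on one side
  have hCside : (∀ c ∈ C, top c < st ∧ bot c < sb) ∨
      (∀ c ∈ C, st < top c ∧ sb < bot c) := by
    obtain ⟨c0, hc0⟩ := hCne
    have hc0S : c0 ∉ S := Set.disjoint_left.1 hdisj hc0
    rcases hside c0 hc0S with ⟨h1, h2⟩ | ⟨h1, h2⟩
    · left
      intro c hc
      obtain ⟨p, hp⟩ := hconn c0 hc0 c hc
      exact hwalk c0 c p hp h1 h2
    · right
      intro c hc
      have hcS : c ∉ S := Set.disjoint_left.1 hdisj hc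
      rcases hside c hcS with ⟨g1, g2⟩ | g
      · obtain ⟨p, hp⟩ := hconn c hc c0 hc0
        exact absurd (hwalk c c0 p hp g1 g2).1 (by linarith)
      · exact g
  intro u hu v hv huv
  rw [hscan] at hu hv
  simp only [Set.mem_setOf_eq] at hu hv
  rcases hu with ⟨hu1, hu2⟩ | ⟨hu1, hu2⟩ <;> rcases hv with ⟨hv1, hv2⟩ | ⟨hv1, hv2⟩
  · -- both on type A
    rcases hCside with hCs | hCs
    · rcases le_total (top u) (top v) with h | h
      · right
        rintro c ⟨hcv, hcC⟩
        obtain ⟨hc1, hc2⟩ := hCs c hcC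
        refine ⟨?_, hcC⟩
        rw [mem_neighborSet, hrep] at hcv ⊢
        rcases hcv with ⟨a1, a2⟩ | ⟨a1, a2⟩ <;>
          first
          | exact Or.inl ⟨by linarith, by linarith⟩
          | exact Or.inr ⟨by linarith, by linarith⟩
          | (exfalso; linarith)
      · left
        rintro c ⟨hcv, hcC⟩
        obtain ⟨hc1, hc2⟩ := hCs c hcC
        refine ⟨?_, hcC⟩
        rw [mem_neighborSet, hrep] at hcv ⊢
        rcases hcv with ⟨a1, a2⟩ | ⟨a1, a2⟩ <;>
          first
          | exact Or.inl ⟨by linarith, by linarith⟩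
          | exact Or.inr ⟨by linarith, by linarith⟩
          | (exfalso; linarith)
    · rcases le_total (bot u) (bot v) with h | h
      · left
        rintro c ⟨hcv, hcC⟩
        obtain ⟨hc1, hc2⟩ := hCs c hcC
        refine ⟨?_, hcC⟩
        rw [mem_neighborSet, hrep] at hcv ⊢
        rcases hcv with ⟨a1, a2⟩ | ⟨a1, a2⟩ <;>
          first
          | exact Or.inl ⟨by linarith, by linarith⟩
          | exact Or.inr ⟨by linarith, by linarith⟩
          | (exfalso; linarith)
      · right
        rintro c ⟨hcv, hcC⟩
        obtain ⟨hc1, hc2⟩ := hCs c hcC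
        refine ⟨?_, hcC⟩
        rw [mem_neighborSet, hrep] at hcv ⊢
        rcases hcv with ⟨a1, a2⟩ | ⟨a1, a2⟩ <;>
          first
          | exact Or.inl ⟨by linarith, by linarith⟩
          | exact Or.inr ⟨by linarith, by linarith⟩
          | (exfalso; linarith)
  · exact absurd ((hrep u v).2 (Or.inl ⟨by linarith, by linarith⟩)) huv
  · exact absurd ((hrep u v).2 (Or.inr ⟨by linarith, by linarith⟩)) huv
  · -- both on type B
    rcases hCside with hCs | hCs
    · rcases le_total (bot u) (bot v) with h | h
      · right
        rintro c ⟨hcv, hcC⟩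
        obtain ⟨hc1, hc2⟩ := hCs c hcC
        refine ⟨?_, hcC⟩
        rw [mem_neighborSet, hrep] at hcv ⊢
        rcases hcv with ⟨a1, a2⟩ | ⟨a1, a2⟩ <;>
          first
          | exact Or.inl ⟨by linarith, by linarith⟩
          | exact Or.inr ⟨by linarith, by linarith⟩
          | (exfalso; linarith)
      · left
        rintro c ⟨hcv, hcC⟩
        obtain ⟨hc1, hc2⟩ := hCs c hcC
        refine ⟨?_, hcC⟩
        rw [mem_neighborSet, hrep] at hcv ⊢
        rcases hcv with ⟨a1, a2⟩ | ⟨a1, a2⟩ <;>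
          first
          | exact Or.inl ⟨by linarith, by linarith⟩
          | exact Or.inr ⟨by linarith, by linarith⟩
          | (exfalso; linarith)
    · rcases le_total (top u) (top v) with h | h
      · left
        rintro c ⟨hcv, hcC⟩
        obtain ⟨hc1, hc2⟩ := hCs c hcC
        refine ⟨?_, hcC⟩
        rw [mem_neighborSet, hrep] at hcv ⊢
        rcases hcv with ⟨a1, a2⟩ | ⟨a1, a2⟩ <;>
          first
          | exact Or.inl ⟨by linarith, by linarith⟩
          | exact Or.inr ⟨by linarith, by linarith⟩
          | (exfalso; linarith)
      · right
        rintro c ⟨hcv, hcC⟩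
        obtain ⟨hc1, hc2⟩ := hCs c hcC
        refine ⟨?_, hcC⟩
        rw [mem_neighborSet, hrep] at hcv ⊢
        rcases hcv with ⟨a1, a2⟩ | ⟨a1, a2⟩ <;>
          first
          | exact Or.inl ⟨by linarith, by linarith⟩
          | exact Or.inr ⟨by linarith, by linarith⟩
          | (exfalso; linarith)
end
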